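/- arXiv:2205.15695 — 9 statements merged into one kernel-verified Lean document; each statement's English description precedes it below -/
import Mathlib

section
/- Let K ≥ 1 and n ≥ 1, and let 0 < λ_1 ≤ λ_2 ≤ … ≤ λ_K. For each type k ∈ {1,…,K} let P_1^k, …, P_n^k be mutually independent random variables (across all types and indices), with P_i^k exponentially distributed with mean λ_k. Define the optimal flow time C_OPT = Σ_j P_j + Σ_{i<j} min(P_i, P_j), where P_1, …, P_N (N = nK) enumerates all the jobs. Then E[C_OPT] = n²·( Σ_{ℓ=1}^K λ_ℓ/4 + Σ_{ℓ=1}^K Σ_{k=ℓ+1}^K λ_k λ_ℓ/(λ_k + λ_ℓ) ) + (3n/4)·Σ_{ℓ=1}^K λ_ℓ. -/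
open MeasureTheory ProbabilityTheory Finset

section Aux

variable {Ω : Type*} [MeasurableSpace Ω] {μ : Measure Ω} [IsProbabilityMeasure μ]

lemma expMeasure_Ioi {r : ℝ} (hr : 0 < r) {t : ℝ} (ht : 0 ≤ t) :
    expMeasure r (Set.Ioi t) = ENNReal.ofReal (Real.exp (-(r * t))) := by
  have hpm := isProbabilityMeasure_expMeasure hr
  have hIic : expMeasure r (Set.Iic t) = ENNReal.ofReal (1 - Real.exp (-(r * t))) := by
    rw [expMeasure, gammaMeasure, withDensity_apply _ measurableSet_Iic]
    have h := lintegral_exponentialPDF_eq_antiDeriv hr t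
    rw [if_pos ht] at h
    exact h
  have hcompl : Set.Ioi t = (Set.Iic t)ᶜ := by simp
  have hle : Real.exp (-(r * t)) ≤ 1 := by
    rw [Real.exp_le_one_iff]
    nlinarith
  rw [hcompl, measure_compl measurableSet_Iic (measure_ne_top _ _), measure_univ, hIic,
    ← ENNReal.ofReal_one, ← ENNReal.ofReal_sub _ (by linarith [Real.exp_pos (-(r * t))])]
  norm_num

lemma surv_map {X : Ω → ℝ} {r : ℝ} (hr : 0 < r) (hm : Measurable X)
    (hd : Measure.map X μ = expMeasure r) {t : ℝ} (ht : 0 ≤ t) :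
    μ {ω | t < X ω} = ENNReal.ofReal (Real.exp (-(r * t))) := by
  have h : {ω | t < X ω} = X ⁻¹' Set.Ioi t := rfl
  rw [h, ← Measure.map_apply hm measurableSet_Ioi, hd, expMeasure_Ioi hr ht]

lemma ae_nonneg_of_exp {X : Ω → ℝ} {r : ℝ} (hm : Measurable X)
    (hd : Measure.map X μ = expMeasure r) : ∀ᵐ ω ∂μ, 0 ≤ X ω := by
  have h0 : μ {ω | X ω < 0} = 0 := by
    have h : {ω | X ω < 0} = X ⁻¹' Set.Iio 0 := rfl
    rw [h, ← Measure.map_apply hm measurableSet_Iio, hd, expMeasure, gammaMeasure,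
      withDensity_apply _ measurableSet_Iio]
    exact lintegral_exponentialPDF_of_nonpos le_rfl
  rw [ae_iff]
  simpa [not_le] using h0

lemma mean_of_surv {X : Ω → ℝ} {r : ℝ} (hr : 0 < r) (hm : Measurable X)
    (hnn : ∀ᵐ ω ∂μ, 0 ≤ X ω)
    (hs : ∀ t : ℝ, 0 < t → μ {ω | t < X ω} = ENNReal.ofReal (Real.exp (-(r * t)))) :
    Integrable X μ ∧ ∫ ω, X ω ∂μ = 1 / r := by
  have hint : IntegrableOn (fun t => Real.exp (-(r * t))) (Set.Ioi 0) := by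
    simpa [neg_mul] using exp_neg_integrableOn_Ioi 0 hr
  have hI : ∫ t in Set.Ioi 0, Real.exp (-(r * t)) = 1 / r := by
    have h0 := integral_comp_mul_left_Ioi (fun x => Real.exp (-x)) 0 hr
    rw [mul_zero, integral_exp_neg_Ioi, neg_zero, Real.exp_zero, smul_eq_mul, mul_one] at h0
    rw [h0, one_div]
  have hlin : ∫⁻ ω, ENNReal.ofReal (X ω) ∂μ = ENNReal.ofReal (1 / r) := by
    rw [lintegral_eq_lintegral_meas_lt μ hnn hm.aemeasurable,
      setLIntegral_congr_fun measurableSet_Ioi (fun t ht => hs t ht),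
      ← ofReal_integral_eq_lintegral_ofReal hint (ae_of_all _ fun t => (Real.exp_pos _).le), hI]
  have hfin : HasFiniteIntegral X μ := by
    rw [hasFiniteIntegral_iff_ofReal hnn, hlin]; exact ENNReal.ofReal_lt_top
  have hInt : Integrable X μ := ⟨hm.aestronglyMeasurable, hfin⟩
  refine ⟨hInt, ?_⟩
  rw [integral_eq_lintegral_of_nonneg_ae hnn hm.aestronglyMeasurable, hlin,
    ENNReal.toReal_ofReal (by positivity)]

lemma mean_exp {X : Ω → ℝ} {r : ℝ} (hr : 0 < r) (hm : Measurable X)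
    (hd : Measure.map X μ = expMeasure r) :
    Integrable X μ ∧ ∫ ω, X ω ∂μ = 1 / r :=
  mean_of_surv hr hm (ae_nonneg_of_exp hm hd) (fun _ ht => surv_map hr hm hd ht.le)

lemma mean_min_exp {X Y : Ω → ℝ} {a b : ℝ} (ha : 0 < a) (hb : 0 < b)
    (hmX : Measurable X) (hmY : Measurable Y)
    (hdX : Measure.map X μ = expMeasure a) (hdY : Measure.map Y μ = expMeasure b)
    (hXY : IndepFun X Y μ) :
    Integrable (fun ω => min (X ω) (Y ω)) μ ∧
      ∫ ω, min (X ω) (Y ω) ∂μ = 1 / (a + b) := by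
  apply mean_of_surv (add_pos ha hb) (hmX.min hmY)
  · filter_upwards [ae_nonneg_of_exp hmX hdX, ae_nonneg_of_exp hmY hdY] with ω h1 h2
    exact le_min h1 h2
  · intro t ht
    have hset : {ω | t < min (X ω) (Y ω)} = (X ⁻¹' Set.Ioi t) ∩ (Y ⁻¹' Set.Ioi t) := by
      ext ω
      simp [lt_min_iff, Set.mem_Ioi]
    rw [hset, indepFun_iff_measure_inter_preimage_eq_mul.mp hXY _ _ measurableSet_Ioi
      measurableSet_Ioi]
    have h1 : μ (X ⁻¹' Set.Ioi t) = ENNReal.ofReal (Real.exp (-(a * t))) :=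
      surv_map ha hmX hdX ht.le
    have h2 : μ (Y ⁻¹' Set.Ioi t) = ENNReal.ofReal (Real.exp (-(b * t))) :=
      surv_map hb hmY hdY ht.le
    rw [h1, h2, ← ENNReal.ofReal_mul (Real.exp_pos _).le, ← Real.exp_add]
    congr 2
    ring

lemma tri_sum {m : ℕ} (F : Fin m → Fin m → ℝ) (hsym : ∀ i j, F i j = F j i) :
    ∑ i, ∑ j ∈ Ioi i, F i j = ((∑ i, ∑ j, F i j) - ∑ i, F i i) / 2 := by
  have h := Finset.sum_sum_Ioi_add_eq_sum_sum_off_diag (f := F)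
  have h3 : ∑ i, ∑ j ∈ Ioi i, (F j i + F i j) = 2 * ∑ i, ∑ j ∈ Ioi i, F i j := by
    rw [Finset.mul_sum]
    refine Finset.sum_congr rfl fun i _ => ?_
    rw [Finset.mul_sum]
    exact Finset.sum_congr rfl fun j _ => by rw [hsym j i]; ring
  rw [h3] at h
  have hT : ∑ i : Fin m, ∑ j : Fin m, F j i = ∑ i : Fin m, ∑ j : Fin m, F i j :=
    Finset.sum_comm
  have h' : 2 * ∑ i, ∑ j ∈ Ioi i, F i j
      = (∑ i : Fin m, ∑ j : Fin m, F i j) - ∑ i, F i i := by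
    rw [h, ← hT, ← Finset.sum_sub_distrib]
    refine Finset.sum_congr rfl fun i _ => eq_sub_iff_add_eq.mpr ?_
    have hc := Finset.sum_compl_add_sum {i} fun j => F j i
    simp only [Finset.sum_singleton] at hc
    convert hc using 3
  linarith

end Aux

/-- Expected flow time of the optimal (shortest-realized-duration-first) schedule
for `K` job types with `n` independent exponential jobs per type. -/
theorem stmt_0
    {Ω : Type*} [MeasurableSpace Ω] (μ : Measure Ω) [IsProbabilityMeasure μ]
    (K n : ℕ) (hK : 1 ≤ K) (hn : 1 ≤ n)
    (lam : Fin K → ℝ) (hpos : ∀ k, 0 < lam k) (hmono : Monotone lam)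
    (P : Fin K → Fin n → Ω → ℝ)
    (hmeas : ∀ k i, Measurable (P k i))
    (hdist : ∀ k i, Measure.map (P k i) μ = expMeasure (1 / lam k))
    (hindep : iIndepFun (m := fun _ : Fin K × Fin n => Real.measurableSpace)
      (fun p : Fin K × Fin n => P p.1 p.2) μ)
    (e : Fin (n * K) ≃ Fin K × Fin n)
    (COPT : Ω → ℝ)
    (hCOPT : ∀ ω, COPT ω =
      (∑ j : Fin (n * K), P (e j).1 (e j).2 ω) +
      ∑ i : Fin (n * K), ∑ j ∈ Finset.Ioi i,
        min (P (e i).1 (e i).2 ω) (P (e j).1 (e j).2 ω)) :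
    ∫ ω, COPT ω ∂μ =
      (n : ℝ) ^ 2 * ((∑ l, lam l / 4) +
        ∑ l, ∑ k ∈ Finset.Ioi l, lam k * lam l / (lam k + lam l)) +
      (3 * n / 4) * ∑ l, lam l := by
  set g : Fin K → Fin K → ℝ := fun k l => lam k * lam l / (lam k + lam l) with hg
  have hrpos : ∀ k : Fin K, (0:ℝ) < 1 / lam k := fun k => one_div_pos.mpr (hpos k)
  have hgsym : ∀ k l, g k l = g l k := by
    intro k l; simp only [hg]; rw [mul_comm, add_comm]
  have hgdiag : ∀ k, g k k = lam k / 2 := by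
    intro k
    have hne := (hpos k).ne'
    simp only [hg]
    rw [show lam k + lam k = lam k * 2 by ring, ← div_div, mul_div_assoc,
      div_self hne, mul_one]
  -- expectation of a single job
  have hsingle : ∀ p : Fin K × Fin n,
      Integrable (P p.1 p.2) μ ∧ ∫ ω, P p.1 p.2 ω ∂μ = lam p.1 := by
    intro p
    have h := mean_exp (μ := μ) (hrpos p.1) (hmeas p.1 p.2) (hdist p.1 p.2)
    rwa [one_div_one_div] at h
  -- expectation of a min of two distinct jobs
  have hminE : ∀ p q : Fin K × Fin n, p ≠ q →
      Integrable (fun ω => min (P p.1 p.2 ω) (P q.1 q.2 ω)) μ ∧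
        ∫ ω, min (P p.1 p.2 ω) (P q.1 q.2 ω) ∂μ = g p.1 q.1 := by
    intro p q hpq
    have hind : IndepFun (P p.1 p.2) (P q.1 q.2) μ := hindep.indepFun hpq
    have h := mean_min_exp (μ := μ) (hrpos p.1) (hrpos q.1) (hmeas p.1 p.2)
      (hmeas q.1 q.2) (hdist p.1 p.2) (hdist q.1 q.2) hind
    have heq : (1:ℝ) / (1 / lam p.1 + 1 / lam q.1) = g p.1 q.1 := by
      rw [one_div_add_one_div (hpos p.1).ne' (hpos q.1).ne', one_div_div]
    rw [heq] at h
    exact h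
  -- rewrite the integral
  have hi1 : ∀ j : Fin (n * K), Integrable (fun ω => P (e j).1 (e j).2 ω) μ :=
    fun j => (hsingle (e j)).1
  have hi2 : ∀ i j : Fin (n * K), i ≠ j →
      Integrable (fun ω => min (P (e i).1 (e i).2 ω) (P (e j).1 (e j).2 ω)) μ := by
    intro i j hij
    exact (hminE (e i) (e j) (fun h => hij (e.injective h))).1
  have hI1 : Integrable (fun ω => ∑ j : Fin (n * K), P (e j).1 (e j).2 ω) μ :=
    integrable_finset_sum _ fun j _ => hi1 j
  have hI2 : Integrable (fun ω => ∑ i : Fin (n * K), ∑ j ∈ Finset.Ioi i,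
      min (P (e i).1 (e i).2 ω) (P (e j).1 (e j).2 ω)) μ := by
    apply integrable_finset_sum _ fun i _ => ?_
    exact integrable_finset_sum _ fun j hj => hi2 i j (mem_Ioi.mp hj).ne'.symm
  have key : ∫ ω, COPT ω ∂μ =
      (∑ j : Fin (n * K), lam (e j).1) +
      ∑ i : Fin (n * K), ∑ j ∈ Finset.Ioi i, g (e i).1 (e j).1 := by
    calc ∫ ω, COPT ω ∂μ
        = ∫ ω, ((∑ j : Fin (n * K), P (e j).1 (e j).2 ω) +
            ∑ i : Fin (n * K), ∑ j ∈ Finset.Ioi i,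
              min (P (e i).1 (e i).2 ω) (P (e j).1 (e j).2 ω)) ∂μ := by
          exact integral_congr_ae (ae_of_all _ hCOPT)
      _ = (∫ ω, ∑ j : Fin (n * K), P (e j).1 (e j).2 ω ∂μ) +
            ∫ ω, ∑ i : Fin (n * K), ∑ j ∈ Finset.Ioi i,
              min (P (e i).1 (e i).2 ω) (P (e j).1 (e j).2 ω) ∂μ :=
          integral_add hI1 hI2
      _ = (∑ j : Fin (n * K), lam (e j).1) +
            ∑ i : Fin (n * K), ∑ j ∈ Finset.Ioi i, g (e i).1 (e j).1 := by
          congr 1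
          · rw [integral_finset_sum _ fun j _ => hi1 j]
            exact Finset.sum_congr rfl fun j _ => (hsingle (e j)).2
          · rw [integral_finset_sum _ fun i _ =>
              integrable_finset_sum _ fun j hj => hi2 i j (mem_Ioi.mp hj).ne'.symm]
            refine Finset.sum_congr rfl fun i _ => ?_
            rw [integral_finset_sum _ fun j hj => hi2 i j (mem_Ioi.mp hj).ne'.symm]
            refine Finset.sum_congr rfl fun j hj => ?_
            exact (hminE (e i) (e j)
              (fun h => ((mem_Ioi.mp hj).ne'.symm) (e.injective h))).2
  -- sum of single expectations
  have hsum1 : ∑ j : Fin (n * K), lam (e j).1 = (n : ℝ) * ∑ l, lam l := by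
    rw [Equiv.sum_comp e (fun p : Fin K × Fin n => lam p.1), Fintype.sum_prod_type,
      Finset.mul_sum]
    refine Finset.sum_congr rfl fun k _ => ?_
    simp [Finset.sum_const, mul_comm]
  -- full double sum over all jobs
  have hfull : ∑ i : Fin (n * K), ∑ j : Fin (n * K), g (e i).1 (e j).1
      = (n : ℝ) ^ 2 * ∑ k, ∑ l, g k l := by
    have h1 : ∀ i : Fin (n * K), ∑ j : Fin (n * K), g (e i).1 (e j).1
        = ∑ q : Fin K × Fin n, g (e i).1 q.1 :=
      fun i => Equiv.sum_comp e (fun q : Fin K × Fin n => g (e i).1 q.1)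
    calc ∑ i : Fin (n * K), ∑ j : Fin (n * K), g (e i).1 (e j).1
        = ∑ i : Fin (n * K), ∑ q : Fin K × Fin n, g (e i).1 q.1 :=
          Finset.sum_congr rfl fun i _ => h1 i
      _ = ∑ p : Fin K × Fin n, ∑ q : Fin K × Fin n, g p.1 q.1 :=
          Equiv.sum_comp e (fun p : Fin K × Fin n => ∑ q : Fin K × Fin n, g p.1 q.1)
      _ = (n : ℝ) ^ 2 * ∑ k, ∑ l, g k l := by
          simp only [Fintype.sum_prod_type, Finset.sum_const, Finset.card_univ,
            Fintype.card_fin, nsmul_eq_mul]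
          rw [Finset.mul_sum]
          refine Finset.sum_congr rfl fun k _ => ?_
          rw [Finset.mul_sum, Finset.mul_sum]
          refine Finset.sum_congr rfl fun l _ => ?_
          ring
  have hdiag : ∑ i : Fin (n * K), g (e i).1 (e i).1 = (n : ℝ) * ∑ k, lam k / 2 := by
    rw [Equiv.sum_comp e (fun p : Fin K × Fin n => g p.1 p.1), Fintype.sum_prod_type,
      Finset.mul_sum]
    refine Finset.sum_congr rfl fun k _ => ?_
    simp only [Finset.sum_const, Finset.card_univ, Fintype.card_fin, nsmul_eq_mul, hgdiag]
  -- triangle sums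
  have htriN := tri_sum (fun i j : Fin (n * K) => g (e i).1 (e j).1)
    (fun i j => hgsym _ _)
  have htriK := tri_sum g hgsym
  -- relate goal's pair sum to g
  have hgoalS : ∑ l, ∑ k ∈ Finset.Ioi l, lam k * lam l / (lam k + lam l)
      = ∑ l, ∑ k ∈ Finset.Ioi l, g l k := by
    refine Finset.sum_congr rfl fun l _ => Finset.sum_congr rfl fun k _ => ?_
    rw [hgsym]
  rw [key, hsum1, htriN, hfull, hdiag, hgoalS, htriK]
  have hdiagK : ∑ k, g k k = ∑ k, lam k / 2 :=
    Finset.sum_congr rfl fun k _ => hgdiag k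
  rw [hdiagK]
  have hA : ∑ l, lam l / 4 = (∑ l, lam l) / 4 := by
    rw [Finset.sum_div]
  have hB : ∑ l, lam l / 2 = (∑ l, lam l) / 2 := by
    rw [Finset.sum_div]
  rw [hA, hB]
  ring
end

section
/- Let K ≥ 1 and n ≥ 1, and let 0 < λ_1 ≤ λ_2 ≤ … ≤ λ_K. For each type k let P_1^k, …, P_n^k be mutually independent random variables, with P_i^k exponentially distributed with mean λ_k. Enumerate all N = nK jobs as P_1, …, P_N, and define C_RR = Σ_j P_j + 2·Σ_{1≤i<j≤N} min(P_i, P_j) and C_OPT = Σ_j P_j + Σ_{1≤i<j≤N} min(P_i, P_j). Then E[C_RR] ≥ (2 − 4/(n+3))·E[C_OPT]. -/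
open MeasureTheory ProbabilityTheory Finset

section Aux

variable {Ω : Type*} [MeasurableSpace Ω] (μ : Measure Ω) [IsProbabilityMeasure μ]

private lemma tail_exp' {X : Ω → ℝ} (hX : Measurable X) {r : ℝ} (hr : 0 < r)
    (hmap : Measure.map X μ = expMeasure r) {t : ℝ} (ht : 0 ≤ t) :
    μ {ω | t < X ω} = ENNReal.ofReal (Real.exp (-(r * t))) := by
  haveI := isProbabilityMeasure_expMeasure hr
  have h1 : μ {ω | t < X ω} = expMeasure r (Set.Ioi t) := by
    rw [← hmap, Measure.map_apply hX measurableSet_Ioi]; rfl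
  have h4 := cdf_expMeasure_eq hr t
  rw [if_pos ht] at h4
  have h2 : expMeasure r (Set.Iic t) = ENNReal.ofReal (1 - Real.exp (-(r * t))) := by
    rw [← h4, cdf_eq_real, measureReal_def, ENNReal.ofReal_toReal (measure_ne_top _ _)]
  have hE1 : Real.exp (-(r * t)) ≤ 1 := by
    rw [Real.exp_le_one_iff]
    nlinarith
  have hE0 : (0:ℝ) ≤ Real.exp (-(r * t)) := (Real.exp_pos _).le
  rw [h1, ← Set.compl_Iic, measure_compl measurableSet_Iic (measure_ne_top _ _), h2,
    measure_univ]
  refine ENNReal.sub_eq_of_eq_add ENNReal.ofReal_ne_top ?_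
  rw [← ENNReal.ofReal_add hE0 (by linarith), ← ENNReal.ofReal_one]
  congr 1
  ring

private lemma nonneg_exp' {X : Ω → ℝ} (hX : Measurable X) {r : ℝ}
    (hmap : Measure.map X μ = expMeasure r) : 0 ≤ᵐ[μ] X := by
  have h0 : μ {ω | X ω < 0} = 0 := by
    have h1 : μ {ω | X ω < 0} = expMeasure r (Set.Iio 0) := by
      rw [← hmap, Measure.map_apply hX measurableSet_Iio]; rfl
    rw [h1, expMeasure, gammaMeasure, withDensity_apply _ measurableSet_Iio]
    exact lintegral_gammaPDF_of_nonpos le_rfl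
  rw [Filter.EventuallyLE, ae_iff]
  simpa [not_le] using h0

private lemma tail_mean' {Z : Ω → ℝ} (hZ : Measurable Z) (hnn : 0 ≤ᵐ[μ] Z) {c : ℝ} (hc : 0 < c)
    (htail : ∀ t : ℝ, 0 < t → μ {ω | t < Z ω} = ENNReal.ofReal (Real.exp (-(c * t)))) :
    Integrable Z μ ∧ ∫ ω, Z ω ∂μ = 1 / c := by
  have hexpint : IntegrableOn (fun t : ℝ ↦ Real.exp (-(c * t))) (Set.Ioi 0) := by
    simpa [neg_mul] using exp_neg_integrableOn_Ioi 0 hc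
  have hval : ∫ t in Set.Ioi (0:ℝ), Real.exp (-(c * t)) = 1 / c := by
    have h := integral_comp_mul_left_Ioi (fun x : ℝ ↦ Real.exp (-x)) 0 hc
    simp only [mul_zero, integral_exp_neg_Ioi_zero, smul_eq_mul, mul_one] at h
    simpa [one_div] using h
  have key : ∫⁻ ω, ENNReal.ofReal (Z ω) ∂μ = ENNReal.ofReal (1 / c) := by
    rw [lintegral_eq_lintegral_meas_lt μ hnn hZ.aemeasurable]
    rw [setLIntegral_congr_fun_ae measurableSet_Ioi
      (Filter.Eventually.of_forall fun t ht => htail t ht)]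
    rw [← ofReal_integral_eq_lintegral_ofReal hexpint
      (Filter.Eventually.of_forall fun t => (Real.exp_pos _).le), hval]
  have hint : Integrable Z μ := by
    refine ⟨hZ.aestronglyMeasurable, ?_⟩
    rw [HasFiniteIntegral]
    have : ∫⁻ ω, ‖Z ω‖ₑ ∂μ = ∫⁻ ω, ENNReal.ofReal (Z ω) ∂μ :=
      lintegral_congr_ae (hnn.mono fun ω h =>
        show ‖Z ω‖ₑ = ENNReal.ofReal (Z ω) from Real.enorm_eq_ofReal h)
    rw [this, key]
    exact ENNReal.ofReal_lt_top
  refine ⟨hint, ?_⟩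
  rw [integral_eq_lintegral_of_nonneg_ae hnn hZ.aestronglyMeasurable, key,
    ENNReal.toReal_ofReal (by positivity)]

private lemma exp_min' {X Y : Ω → ℝ} (hX : Measurable X) (hY : Measurable Y) {a b : ℝ}
    (ha : 0 < a) (hb : 0 < b)
    (hmX : Measure.map X μ = expMeasure a) (hmY : Measure.map Y μ = expMeasure b)
    (hXY : IndepFun X Y μ) :
    Integrable (fun ω => min (X ω) (Y ω)) μ ∧
      ∫ ω, min (X ω) (Y ω) ∂μ = 1 / (a + b) := by
  refine tail_mean' μ (hX.min hY) ?_ (by linarith) ?_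
  · filter_upwards [nonneg_exp' μ hX hmX, nonneg_exp' μ hY hmY] with ω h1 h2
    exact le_min h1 h2
  · intro t ht
    have hset : {ω | t < min (X ω) (Y ω)} = X ⁻¹' (Set.Ioi t) ∩ Y ⁻¹' (Set.Ioi t) := by
      ext ω; simp [lt_min_iff]
    rw [hset, hXY.measure_inter_preimage_eq_mul _ _ measurableSet_Ioi measurableSet_Ioi]
    have h1 : μ (X ⁻¹' (Set.Ioi t)) = ENNReal.ofReal (Real.exp (-(a * t))) :=
      tail_exp' μ hX ha hmX ht.le
    have h2 : μ (Y ⁻¹' (Set.Ioi t)) = ENNReal.ofReal (Real.exp (-(b * t))) :=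
      tail_exp' μ hY hb hmY ht.le
    rw [h1, h2, ← ENNReal.ofReal_mul (Real.exp_pos _).le, ← Real.exp_add]
    congr 2
    ring

end Aux

private lemma sum_swap_IioIoi' {N : ℕ} (f : Fin N → Fin N → ℝ) :
    ∑ i, ∑ j ∈ Finset.Iio i, f i j = ∑ i, ∑ j ∈ Finset.Ioi i, f j i := by
  rw [Finset.sum_sigma', Finset.sum_sigma']
  refine Finset.sum_nbij' (fun x => ⟨x.2, x.1⟩) (fun x => ⟨x.2, x.1⟩) ?_ ?_
    (fun _ _ => rfl) (fun _ _ => rfl) (fun _ _ => rfl) <;>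
  · rintro ⟨a, b⟩ h
    simp only [Finset.mem_sigma, Finset.mem_univ, Finset.mem_Iio, Finset.mem_Ioi, true_and] at h ⊢
    exact h

private lemma sum_split' {N : ℕ} (f : Fin N → Fin N → ℝ) (hsymm : ∀ i j, f i j = f j i) :
    ∑ i, ∑ j, f i j = 2 * (∑ i, ∑ j ∈ Finset.Ioi i, f i j) + ∑ i, f i i := by
  have expand : ∀ i : Fin N, ∑ j, f i j
      = f i i + ((∑ j ∈ Finset.Iio i, f i j) + ∑ j ∈ Finset.Ioi i, f i j) := by
    intro i
    have huniv : (Finset.univ : Finset (Fin N)) = insert i (Finset.Iio i ∪ Finset.Ioi i) := by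
      ext j
      simp only [Finset.mem_univ, Finset.mem_insert, Finset.mem_union, Finset.mem_Iio,
        Finset.mem_Ioi, true_iff]
      rcases lt_trichotomy j i with h | h | h
      · exact Or.inr (Or.inl h)
      · exact Or.inl h
      · exact Or.inr (Or.inr h)
    rw [huniv, Finset.sum_insert (by simp), Finset.sum_union (by
      rw [Finset.disjoint_left]; intro a ha hb
      exact absurd (lt_trans (Finset.mem_Iio.mp ha) (Finset.mem_Ioi.mp (by simpa using hb)))
        (lt_irrefl _) )]
  have h1 : ∑ i, ∑ j, f i j = (∑ i, f i i) + ((∑ i, ∑ j ∈ Finset.Iio i, f i j)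
      + ∑ i, ∑ j ∈ Finset.Ioi i, f i j) := by
    rw [← Finset.sum_add_distrib, ← Finset.sum_add_distrib]
    exact Finset.sum_congr rfl fun i _ => expand i
  rw [h1, sum_swap_IioIoi']
  have h2 : ∑ i, ∑ j ∈ Finset.Ioi i, f j i = ∑ i, ∑ j ∈ Finset.Ioi i, f i j :=
    Finset.sum_congr rfl fun i _ => Finset.sum_congr rfl fun j _ => hsymm j i
  rw [h2]; ring

/-- The competitive ratio of Round-Robin is at least `2 - 4/(n+3)`:
`E[C_RR] ≥ (2 - 4/(n+3)) * E[C_OPT]`. -/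
theorem stmt_2
    {Ω : Type*} [MeasurableSpace Ω] (μ : Measure Ω) [IsProbabilityMeasure μ]
    (K n : ℕ) (hK : 1 ≤ K) (hn : 1 ≤ n)
    (lam : Fin K → ℝ) (hpos : ∀ k, 0 < lam k) (hmono : Monotone lam)
    (P : Fin K → Fin n → Ω → ℝ)
    (hmeas : ∀ k i, Measurable (P k i))
    (hdist : ∀ k i, Measure.map (P k i) μ = expMeasure (1 / lam k))
    (hindep : iIndepFun
      (fun p : Fin K × Fin n => P p.1 p.2) μ)
    (e : Fin (n * K) ≃ Fin K × Fin n)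
    (CRR COPT : Ω → ℝ)
    (hCRR : ∀ ω, CRR ω =
      (∑ j : Fin (n * K), P (e j).1 (e j).2 ω) +
      2 * ∑ i : Fin (n * K), ∑ j ∈ Finset.Ioi i,
        min (P (e i).1 (e i).2 ω) (P (e j).1 (e j).2 ω))
    (hCOPT : ∀ ω, COPT ω =
      (∑ j : Fin (n * K), P (e j).1 (e j).2 ω) +
      ∑ i : Fin (n * K), ∑ j ∈ Finset.Ioi i,
        min (P (e i).1 (e i).2 ω) (P (e j).1 (e j).2 ω)) :
    ∫ ω, CRR ω ∂μ ≥ (2 - 4 / ((n : ℝ) + 3)) * ∫ ω, COPT ω ∂μ := by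
  classical
  have hrate : ∀ k, 0 < 1 / lam k := fun k => by have := hpos k; positivity
  have hFmeas : ∀ j : Fin (n * K), Measurable (P (e j).1 (e j).2) := fun j => hmeas _ _
  have hFmap : ∀ j : Fin (n * K),
      Measure.map (P (e j).1 (e j).2) μ = expMeasure (1 / lam (e j).1) := fun j => hdist _ _
  have hFsingle : ∀ j : Fin (n * K), Integrable (P (e j).1 (e j).2) μ ∧
      ∫ ω, P (e j).1 (e j).2 ω ∂μ = lam (e j).1 := by
    intro j
    have h := tail_mean' μ (hFmeas j) (nonneg_exp' μ (hFmeas j) (hFmap j)) (hrate (e j).1)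
      (fun t ht => tail_exp' μ (hFmeas j) (hrate (e j).1) (hFmap j) ht.le)
    rwa [one_div_one_div] at h
  have hFindep : ∀ i j : Fin (n * K), i ≠ j →
      IndepFun (P (e i).1 (e i).2) (P (e j).1 (e j).2) μ := by
    intro i j hij
    exact hindep.indepFun (fun h => hij (e.injective h))
  have hmin : ∀ i j : Fin (n * K), i ≠ j →
      Integrable (fun ω => min (P (e i).1 (e i).2 ω) (P (e j).1 (e j).2 ω)) μ ∧
      ∫ ω, min (P (e i).1 (e i).2 ω) (P (e j).1 (e j).2 ω) ∂μ
        = 1 / (1 / lam (e i).1 + 1 / lam (e j).1) :=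
    fun i j hij => exp_min' μ (hFmeas i) (hFmeas j) (hrate _) (hrate _) (hFmap i) (hFmap j)
      (hFindep i j hij)
  have hintS : Integrable (fun ω => ∑ j : Fin (n * K), P (e j).1 (e j).2 ω) μ :=
    integrable_finset_sum _ fun j _ => (hFsingle j).1
  have hintM : Integrable (fun ω => ∑ i : Fin (n * K), ∑ j ∈ Finset.Ioi i,
      min (P (e i).1 (e i).2 ω) (P (e j).1 (e j).2 ω)) μ :=
    integrable_finset_sum _ fun i _ => integrable_finset_sum _ fun j hj =>
      (hmin i j (ne_of_lt (Finset.mem_Ioi.mp hj))).1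
  set s : ℝ := ∑ j : Fin (n * K), lam (e j).1 with hs
  set M : ℝ := ∑ i : Fin (n * K), ∑ j ∈ Finset.Ioi i,
      ∫ ω, min (P (e i).1 (e i).2 ω) (P (e j).1 (e j).2 ω) ∂μ with hMdef
  have hES : ∫ ω, (∑ j : Fin (n * K), P (e j).1 (e j).2 ω) ∂μ = s := by
    rw [integral_finset_sum _ fun j _ => (hFsingle j).1]
    exact Finset.sum_congr rfl fun j _ => (hFsingle j).2
  have hEM : ∫ ω, (∑ i : Fin (n * K), ∑ j ∈ Finset.Ioi i,
      min (P (e i).1 (e i).2 ω) (P (e j).1 (e j).2 ω)) ∂μ = M := by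
    rw [integral_finset_sum _ fun i _ => integrable_finset_sum _ fun j hj =>
      (hmin i j (ne_of_lt (Finset.mem_Ioi.mp hj))).1]
    exact Finset.sum_congr rfl fun i _ => integral_finset_sum _ fun j hj =>
      (hmin i j (ne_of_lt (Finset.mem_Ioi.mp hj))).1
  have hCRRval : ∫ ω, CRR ω ∂μ = s + 2 * M := by
    have hfe : CRR = fun ω => (∑ j : Fin (n * K), P (e j).1 (e j).2 ω) +
        2 * ∑ i : Fin (n * K), ∑ j ∈ Finset.Ioi i,
          min (P (e i).1 (e i).2 ω) (P (e j).1 (e j).2 ω) := funext hCRR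
    rw [hfe, integral_add hintS (hintM.const_mul 2), integral_const_mul, hES, hEM]
  have hCOPTval : ∫ ω, COPT ω ∂μ = s + M := by
    have hfe : COPT = fun ω => (∑ j : Fin (n * K), P (e j).1 (e j).2 ω) +
        ∑ i : Fin (n * K), ∑ j ∈ Finset.Ioi i,
          min (P (e i).1 (e i).2 ω) (P (e j).1 (e j).2 ω) := funext hCOPT
    rw [hfe, integral_add hintS hintM, hES, hEM]
  -- the combinatorial lower bound on M
  set g : Fin (n * K) → Fin (n * K) → ℝ :=
    fun i j => if (e j).1 = (e i).1 then lam (e i).1 / 2 else 0 with hg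
  have hgsymm : ∀ i j, g i j = g j i := by
    intro i j
    by_cases h : (e j).1 = (e i).1
    · simp [hg, h]
    · have h' : ¬ (e i).1 = (e j).1 := fun hh => h hh.symm
      simp [hg, h, h']
  have hMg : (∑ i, ∑ j ∈ Finset.Ioi i, g i j) ≤ M := by
    apply Finset.sum_le_sum
    intro i _
    apply Finset.sum_le_sum
    intro j hj
    have hij := ne_of_lt (Finset.mem_Ioi.mp hj)
    rw [(hmin i j hij).2]
    by_cases h : (e j).1 = (e i).1
    · have hval : 1 / (1 / lam (e i).1 + 1 / lam (e i).1) = lam (e i).1 / 2 := by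
        rw [← add_div, one_div_div]
        norm_num
      simp only [hg, if_pos h, h, hval]
      exact le_rfl
    · simp only [hg, if_neg h]
      have h1 := hrate (e i).1
      have h2 := hrate (e j).1
      positivity
  have hrow : ∀ i : Fin (n * K), (∑ j, g i j) = (n : ℝ) * (lam (e i).1 / 2) := by
    intro i
    have h1 : (∑ j, g i j)
        = ∑ p : Fin K × Fin n, (if p.1 = (e i).1 then lam (e i).1 / 2 else 0) :=
      Equiv.sum_comp e (fun p : Fin K × Fin n => if p.1 = (e i).1 then lam (e i).1 / 2 else 0)
    rw [h1, Fintype.sum_prod_type]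
    have h2 : ∀ k : Fin K, (∑ _m : Fin n, (if k = (e i).1 then lam (e i).1 / 2 else 0))
        = if k = (e i).1 then (n : ℝ) * (lam (e i).1 / 2) else 0 := by
      intro k
      by_cases h : k = (e i).1 <;> simp [h, Finset.sum_const, mul_comm]
    rw [Finset.sum_congr rfl fun k _ => h2 k]
    simp
  have hgval : (∑ i, ∑ j ∈ Finset.Ioi i, g i j) = ((n : ℝ) - 1) / 4 * s := by
    have hsplit := sum_split' g hgsymm
    have hLHS : ∑ i, ∑ j, g i j = (n : ℝ) * (s / 2) := by
      rw [Finset.sum_congr rfl fun i _ => hrow i, ← Finset.mul_sum, hs, ← Finset.sum_div]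
    have hdiag : ∑ i, g i i = s / 2 := by
      have : ∀ i : Fin (n * K), g i i = lam (e i).1 / 2 := fun i => by simp [hg]
      rw [Finset.sum_congr rfl fun i _ => this i, hs, ← Finset.sum_div]
    rw [hLHS, hdiag] at hsplit
    linarith
  have hs0 : 0 ≤ s := Finset.sum_nonneg fun j _ => (hpos _).le
  have hMlb : ((n : ℝ) - 1) / 4 * s ≤ M := hgval ▸ hMg
  have hn1 : (1 : ℝ) ≤ (n : ℝ) := by exact_mod_cast hn
  rw [hCRRval, hCOPTval, ge_iff_le, ← sub_nonneg]
  have hc3 : (0 : ℝ) < (n : ℝ) + 3 := by positivity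
  have key : s + 2 * M - (2 - 4 / ((n : ℝ) + 3)) * (s + M)
      = (4 * M - ((n : ℝ) - 1) * s) / ((n : ℝ) + 3) := by
    field_simp
    ring
  rw [key]
  apply div_nonneg _ hc3.le
  linarith
end

section
/- Let K ≥ 1, n ≥ 1, and 0 < λ_1 ≤ λ_2 ≤ … ≤ λ_K, with mutually independent exponential job durations as in the scheduling instance. Define f_K(λ) = ( 2·Σ_{ℓ=1}^K Σ_{k=ℓ+1}^K λ_k λ_ℓ/(λ_k + λ_ℓ) − Σ_{ℓ=1}^K (K − ℓ)·λ_ℓ ) / ( Σ_{ℓ=1}^K λ_ℓ/4 + Σ_{ℓ=1}^K Σ_{k=ℓ+1}^K λ_k λ_ℓ/(λ_k + λ_ℓ) ). Then E[C_FTPP] ≤ (2 − f_K(λ))·E[C_OPT]. -/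
open MeasureTheory ProbabilityTheory Finset

namespace FTPPAux

lemma expMeasure_Iic' {r : ℝ} (hr : 0 < r) (x : ℝ) :
    expMeasure r (Set.Iic x)
      = ENNReal.ofReal (if 0 ≤ x then 1 - Real.exp (-(r*x)) else 0) := by
  rw [expMeasure, gammaMeasure, withDensity_apply _ measurableSet_Iic]
  exact lintegral_exponentialPDF_eq_antiDeriv hr x

lemma expMeasure_Iio_zero' {r : ℝ} : expMeasure r (Set.Iio 0) = 0 := by
  rw [expMeasure, gammaMeasure, withDensity_apply _ measurableSet_Iio]
  exact lintegral_gammaPDF_of_nonpos le_rfl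

lemma expMeasure_Ioi' {r : ℝ} (hr : 0 < r) {x : ℝ} (hx : 0 ≤ x) :
    expMeasure r (Set.Ioi x) = ENNReal.ofReal (Real.exp (-(r*x))) := by
  have h := isProbabilityMeasure_expMeasure hr
  have hcompl : Set.Ioi x = (Set.Iic x)ᶜ := Set.compl_Iic.symm
  have hexple : Real.exp (-(r*x)) ≤ 1 := by
    rw [Real.exp_le_one_iff]
    simp only [Left.neg_nonpos_iff]
    positivity
  rw [hcompl, measure_compl measurableSet_Iic (measure_ne_top _ _), measure_univ,
    expMeasure_Iic' hr, if_pos hx, ← ENNReal.ofReal_one,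
    ← ENNReal.ofReal_sub _ (by linarith)]
  norm_num

lemma integral_exp_Ioi' {r : ℝ} (hr : 0 < r) :
    ∫ t in Set.Ioi (0:ℝ), Real.exp (-(r*t)) = 1 / r := by
  have h := Real.integral_rpow_mul_exp_neg_mul_Ioi (a := 1) one_pos hr
  simpa using h

variable {Ω : Type*} [MeasurableSpace Ω] (μ : Measure Ω) [IsProbabilityMeasure μ]

lemma mean_of_exp_surv {X : Ω → ℝ} (hX : Measurable X) {r : ℝ} (hr : 0 < r)
    (h0 : μ {ω | X ω < 0} = 0)
    (hs : ∀ t : ℝ, 0 < t → μ {ω | t < X ω} = ENNReal.ofReal (Real.exp (-(r*t)))) :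
    Integrable X μ ∧ ∫ ω, X ω ∂μ = 1 / r := by
  have hae : ∀ᵐ ω ∂μ, 0 ≤ X ω := by
    rw [ae_iff]
    simpa [not_le] using h0
  have hlin : ∫⁻ ω, ENNReal.ofReal (X ω) ∂μ
      = ∫⁻ t in Set.Ioi (0:ℝ), ENNReal.ofReal (Real.exp (-(r*t))) := by
    rw [lintegral_eq_lintegral_meas_lt μ hae hX.aemeasurable]
    exact setLIntegral_congr_fun measurableSet_Ioi
      (fun t ht => hs t ht)
  have hexp : IntegrableOn (fun t => Real.exp (-(r*t))) (Set.Ioi (0:ℝ)) := by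
    simpa [neg_mul] using exp_neg_integrableOn_Ioi 0 hr
  have hfin : ∫⁻ t in Set.Ioi (0:ℝ), ENNReal.ofReal (Real.exp (-(r*t))) < ⊤ := by
    refine lt_of_le_of_lt (lintegral_mono fun t => ?_) hexp.hasFiniteIntegral
    rw [← ofReal_norm, Real.norm_eq_abs]
    exact ENNReal.ofReal_le_ofReal (le_abs_self _)
  have hInt : Integrable X μ := by
    refine ⟨hX.aestronglyMeasurable, ?_⟩
    rw [hasFiniteIntegral_iff_norm]
    have : ∫⁻ ω, ENNReal.ofReal ‖X ω‖ ∂μ = ∫⁻ ω, ENNReal.ofReal (X ω) ∂μ := by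
      refine lintegral_congr_ae ?_
      filter_upwards [hae] with ω hω
      rw [Real.norm_of_nonneg hω]
    rw [this, hlin]
    exact hfin
  refine ⟨hInt, ?_⟩
  rw [hInt.integral_eq_integral_meas_lt hae]
  have : ∫ t in Set.Ioi (0:ℝ), (μ {a | t < X a}).toReal
      = ∫ t in Set.Ioi (0:ℝ), Real.exp (-(r*t)) := by
    refine setIntegral_congr_fun measurableSet_Ioi fun t ht => ?_
    rw [hs t ht, ENNReal.toReal_ofReal (Real.exp_pos _).le]
  rw [← integral_exp_Ioi' hr]
  exact this

lemma neg_null {X : Ω → ℝ} (hX : Measurable X) {r : ℝ}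
    (hmap : Measure.map X μ = expMeasure r) : μ {ω | X ω < 0} = 0 := by
  have h : {ω | X ω < 0} = X ⁻¹' Set.Iio 0 := rfl
  rw [h, ← Measure.map_apply hX measurableSet_Iio, hmap, expMeasure_Iio_zero']

lemma surv {X : Ω → ℝ} (hX : Measurable X) {r : ℝ} (hr : 0 < r)
    (hmap : Measure.map X μ = expMeasure r) {t : ℝ} (ht : 0 ≤ t) :
    μ {ω | t < X ω} = ENNReal.ofReal (Real.exp (-(r*t))) := by
  have h : {ω | t < X ω} = X ⁻¹' Set.Ioi t := rfl
  rw [h, ← Measure.map_apply hX measurableSet_Ioi, hmap, expMeasure_Ioi' hr ht]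

lemma single_facts {X : Ω → ℝ} (hX : Measurable X) {r : ℝ} (hr : 0 < r)
    (hmap : Measure.map X μ = expMeasure r) :
    Integrable X μ ∧ ∫ ω, X ω ∂μ = 1 / r :=
  mean_of_exp_surv μ hX hr (neg_null μ hX hmap)
    (fun t ht => surv μ hX hr hmap ht.le)

lemma min_facts {X Y : Ω → ℝ} (hX : Measurable X) (hY : Measurable Y)
    {r s : ℝ} (hr : 0 < r) (hs : 0 < s)
    (hmapX : Measure.map X μ = expMeasure r) (hmapY : Measure.map Y μ = expMeasure s)
    (hind : IndepFun X Y μ) :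
    Integrable (fun ω => min (X ω) (Y ω)) μ
      ∧ ∫ ω, min (X ω) (Y ω) ∂μ = 1 / (r + s) := by
  refine mean_of_exp_surv μ (hX.min hY) (add_pos hr hs) ?_ ?_
  · refine measure_mono_null (fun ω hω => ?_) (measure_union_null
      (neg_null μ hX hmapX) (neg_null μ hY hmapY))
    have h' : min (X ω) (Y ω) < 0 := hω
    rcases min_lt_iff.1 h' with h | h
    · exact Or.inl h
    · exact Or.inr h
  · intro t ht
    have hset : {ω | t < min (X ω) (Y ω)} = X ⁻¹' Set.Ioi t ∩ Y ⁻¹' Set.Ioi t := by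
      ext ω; simp [lt_min_iff]
    rw [hset, hind.measure_inter_preimage_eq_mul _ _ measurableSet_Ioi measurableSet_Ioi,
      ← Measure.map_apply hX measurableSet_Ioi, ← Measure.map_apply hY measurableSet_Ioi,
      hmapX, hmapY, expMeasure_Ioi' hr ht.le, expMeasure_Ioi' hs ht.le,
      ← ENNReal.ofReal_mul (Real.exp_pos _).le, ← Real.exp_add]
    ring_nf

-- combinatorial lemmas
lemma sum_triangle {N : ℕ} (g : Fin N → ℝ) :
    ∑ a : Fin N, ∑ b ∈ Iic a, g b
      = ∑ b : Fin N, g b + ∑ i : Fin N, ∑ _j ∈ Ioi i, g i := by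
  have h1 : ∑ a : Fin N, ∑ b ∈ Iic a, g b
      = ∑ a : Fin N, ∑ b : Fin N, if b ≤ a then g b else 0 := by
    refine sum_congr rfl fun a _ => ?_
    rw [← Finset.sum_filter]
    congr 1
    ext b; simp
  rw [h1, Finset.sum_comm]
  have h2 : ∀ b : Fin N, (∑ a : Fin N, if b ≤ a then g b else 0) = ∑ _a ∈ Ici b, g b := by
    intro b
    rw [← Finset.sum_filter]
    congr 1
    ext a; simp
  calc ∑ b : Fin N, ∑ a : Fin N, (if b ≤ a then g b else 0)
      = ∑ b : Fin N, ∑ _a ∈ Ici b, g b := sum_congr rfl fun b _ => h2 b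
    _ = ∑ b : Fin N, (g b + ∑ _a ∈ Ioi b, g b) := by
        refine sum_congr rfl fun b _ => ?_
        rw [← Finset.Ioi_insert, Finset.sum_insert (by simp)]
    _ = ∑ b : Fin N, g b + ∑ i : Fin N, ∑ _j ∈ Ioi i, g i := Finset.sum_add_distrib

lemma sum_pairs {N : ℕ} (g : Fin N → Fin N → ℝ) (hsym : ∀ i j, g i j = g j i) :
    ∑ i : Fin N, ∑ j : Fin N, g i j
      = 2 * (∑ i : Fin N, ∑ j ∈ Ioi i, g i j) + ∑ i : Fin N, g i i := by
  have hsplit : ∀ i : Fin N, ∑ j : Fin N, g i j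
      = (∑ j ∈ Iio i, g i j) + (g i i + ∑ j ∈ Ioi i, g i j) := by
    intro i
    have hu : (univ : Finset (Fin N)) = Iio i ∪ Ici i := by
      ext j
      simp [lt_or_ge]
    rw [hu, Finset.sum_union (by
      simp only [Finset.disjoint_left, mem_Iio, mem_Ici]
      intro j hj
      exact not_le.2 hj)]
    congr 1
    rw [← Finset.Ioi_insert, Finset.sum_insert (by simp)]
  have hswap : ∑ i : Fin N, ∑ j ∈ Iio i, g i j = ∑ i : Fin N, ∑ j ∈ Ioi i, g i j := by
    have e1 : ∑ i : Fin N, ∑ j ∈ Iio i, g i j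
        = ∑ i : Fin N, ∑ j : Fin N, if j < i then g i j else 0 := by
      refine sum_congr rfl fun i _ => ?_
      rw [← Finset.sum_filter]
      congr 1
      ext j; simp
    have e2 : ∀ j : Fin N, (∑ i : Fin N, if j < i then g i j else 0) = ∑ i ∈ Ioi j, g i j := by
      intro j
      rw [← Finset.sum_filter]
      congr 1
      ext i; simp
    rw [e1, Finset.sum_comm]
    calc ∑ j : Fin N, ∑ i : Fin N, (if j < i then g i j else 0)
        = ∑ j : Fin N, ∑ i ∈ Ioi j, g i j := sum_congr rfl fun j _ => e2 j
      _ = ∑ i : Fin N, ∑ j ∈ Ioi i, g i j := by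
          refine sum_congr rfl fun j _ => sum_congr rfl fun i _ => hsym i j
  simp only [hsplit]
  rw [Finset.sum_add_distrib, Finset.sum_add_distrib, hswap]
  ring

lemma reindex_single {N K n : ℕ} (e : Fin N ≃ Fin K × Fin n) (F : Fin K → ℝ) :
    ∑ i : Fin N, F (e i).1 = (n:ℝ) * ∑ k : Fin K, F k := by
  rw [show ∑ i : Fin N, F (e i).1 = ∑ p : Fin K × Fin n, F p.1 from
    Equiv.sum_comp e (fun p => F p.1), Fintype.sum_prod_type]
  simp [Finset.sum_const, Finset.mul_sum]

lemma pair_reduce {N K n : ℕ} (e : Fin N ≃ Fin K × Fin n) (lam : Fin K → ℝ)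
    (G : ℝ → ℝ → ℝ) (hsym : ∀ x y, G x y = G y x) :
    ∑ i : Fin N, ∑ j ∈ Ioi i, G (lam (e i).1) (lam (e j).1)
      = (n:ℝ)^2 * (∑ k : Fin K, ∑ l ∈ Ioi k, G (lam k) (lam l))
        + ((n:ℝ)^2 - (n:ℝ))/2 * ∑ k : Fin K, G (lam k) (lam k) := by
  have h1 := sum_pairs (fun i j : Fin N => G (lam (e i).1) (lam (e j).1))
    (fun i j => hsym _ _)
  have h2 := sum_pairs (fun k l : Fin K => G (lam k) (lam l)) (fun k l => hsym _ _)
  have h3 : ∑ i : Fin N, ∑ j : Fin N, G (lam (e i).1) (lam (e j).1)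
      = (n:ℝ)^2 * ∑ k : Fin K, ∑ l : Fin K, G (lam k) (lam l) := by
    have hin : ∀ i : Fin N, ∑ j : Fin N, G (lam (e i).1) (lam (e j).1)
        = (n:ℝ) * ∑ l : Fin K, G (lam (e i).1) (lam l) :=
      fun i => reindex_single e (fun l => G (lam (e i).1) (lam l))
    simp only [hin]
    rw [← Finset.mul_sum, reindex_single e (fun k => ∑ l : Fin K, G (lam k) (lam l))]
    ring
  have h4 : ∑ i : Fin N, G (lam (e i).1) (lam (e i).1)
      = (n:ℝ) * ∑ k : Fin K, G (lam k) (lam k) :=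
    reindex_single e (fun k => G (lam k) (lam k))
  rw [h2] at h3
  rw [h1, h4] at h3
  linarith


lemma final_ineq (n S Tv Mv f : ℝ) (hS : 0 < S) (hT0 : 0 ≤ Tv) (hM0 : 0 ≤ Mv)
    (hMT : Mv ≤ Tv) (hn0 : 0 ≤ n) (hf' : f = (2*Mv - Tv)/(S/4 + Mv)) :
    n*S + (n^2*Tv + (n^2-n)/2*S)
      ≤ (2 - f) * (n*S + (n^2*Mv + (n^2-n)/2*(S/2))) := by
  have hD : 0 < S/4 + Mv := by linarith
  have hfE : f * (n*S + (n^2*Mv + (n^2-n)/2*(S/2))) ≤ n*S + n^2*(2*Mv - Tv) := by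
    rw [hf', div_mul_eq_mul_div, div_le_iff₀ hD]
    nlinarith [mul_nonneg (mul_nonneg hn0 hS.le)
      (show (0:ℝ) ≤ S/4 + 3*Tv/4 - Mv/2 by linarith)]
  nlinarith [hfE]

end FTPPAux

open FTPPAux

set_option maxHeartbeats 1000000 in
/-- Competitive ratio bound for FTPP with `K` job types:
`E[C_FTPP] ≤ (2 - f_K(λ)) * E[C_OPT]`. -/
theorem stmt_5
    {Ω : Type*} [MeasurableSpace Ω] (μ : Measure Ω) [IsProbabilityMeasure μ]
    (K n : ℕ) (hK : 1 ≤ K) (hn : 1 ≤ n)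
    (lam : Fin K → ℝ) (hpos : ∀ k, 0 < lam k) (hmono : Monotone lam)
    (P : Fin K → Fin n → Ω → ℝ)
    (hmeas : ∀ k i, Measurable (P k i))
    (hdist : ∀ k i, Measure.map (P k i) μ = expMeasure (1 / lam k))
    (hindep : iIndepFun
      (fun p : Fin K × Fin n => P p.1 p.2) μ)
    (e : Fin (n * K) ≃ Fin K × Fin n)
    -- the enumeration lists the jobs in nondecreasing order of their means
    (he : ∀ a b : Fin (n * K), a ≤ b → lam (e a).1 ≤ lam (e b).1)
    (CFTPP COPT : Ω → ℝ)
    (hCFTPP : ∀ ω, CFTPP ω =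
      ∑ a : Fin (n * K), ∑ b ∈ Finset.Iic a, P (e b).1 (e b).2 ω)
    (hCOPT : ∀ ω, COPT ω =
      (∑ j : Fin (n * K), P (e j).1 (e j).2 ω) +
      ∑ i : Fin (n * K), ∑ j ∈ Finset.Ioi i,
        min (P (e i).1 (e i).2 ω) (P (e j).1 (e j).2 ω))
    (f : ℝ)
    (hf : f = (2 * (∑ l, ∑ k ∈ Finset.Ioi l, lam k * lam l / (lam k + lam l)) -
        ∑ l : Fin K, ((K : ℝ) - ((l : ℕ) + 1)) * lam l) /
      ((∑ l, lam l / 4) +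
        ∑ l, ∑ k ∈ Finset.Ioi l, lam k * lam l / (lam k + lam l))) :
    ∫ ω, CFTPP ω ∂μ ≤ (2 - f) * ∫ ω, COPT ω ∂μ := by
  -- basic facts about single jobs
  have hrpos : ∀ k : Fin K, 0 < 1 / lam k := fun k => one_div_pos.2 (hpos k)
  have hPfacts : ∀ p : Fin K × Fin n,
      Integrable (P p.1 p.2) μ ∧ ∫ ω, P p.1 p.2 ω ∂μ = lam p.1 := by
    intro p
    have h := single_facts μ (hmeas p.1 p.2) (hrpos p.1) (hdist p.1 p.2)
    rw [one_div_one_div] at h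
    exact h
  have hIntP : ∀ p : Fin K × Fin n, Integrable (P p.1 p.2) μ := fun p => (hPfacts p).1
  have hEP : ∀ p : Fin K × Fin n, ∫ ω, P p.1 p.2 ω ∂μ = lam p.1 := fun p => (hPfacts p).2
  -- facts about pairwise minima
  have hminfacts : ∀ p q : Fin K × Fin n, p ≠ q →
      Integrable (fun ω => min (P p.1 p.2 ω) (P q.1 q.2 ω)) μ ∧
      ∫ ω, min (P p.1 p.2 ω) (P q.1 q.2 ω) ∂μ
        = lam p.1 * lam q.1 / (lam p.1 + lam q.1) := by
    intro p q hpq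
    have hind : IndepFun (P p.1 p.2) (P q.1 q.2) μ := hindep.indepFun hpq
    have h := min_facts μ (hmeas p.1 p.2) (hmeas q.1 q.2) (hrpos p.1) (hrpos q.1)
      (hdist p.1 p.2) (hdist q.1 q.2) hind
    have harm : 1 / (1 / lam p.1 + 1 / lam q.1)
        = lam p.1 * lam q.1 / (lam p.1 + lam q.1) := by
      have h1 := (hpos p.1).ne'
      have h2 := (hpos q.1).ne'
      field_simp
      ring
    rw [harm] at h
    exact h
  -- compute E[CFTPP]
  have hICFTPP : ∫ ω, CFTPP ω ∂μ
      = ∑ a : Fin (n * K), ∑ b ∈ Iic a, lam (e b).1 := by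
    simp only [hCFTPP]
    rw [integral_finset_sum _ (fun a _ =>
      integrable_finset_sum _ (fun b _ => hIntP (e b)))]
    refine sum_congr rfl fun a _ => ?_
    rw [integral_finset_sum _ (fun b _ => hIntP (e b))]
    exact sum_congr rfl fun b _ => hEP (e b)
  -- compute E[COPT]
  have hICOPT : ∫ ω, COPT ω ∂μ
      = (∑ j : Fin (n * K), lam (e j).1)
        + ∑ i : Fin (n * K), ∑ j ∈ Ioi i,
            lam (e i).1 * lam (e j).1 / (lam (e i).1 + lam (e j).1) := by
    simp only [hCOPT]
    have hIminset : ∀ i : Fin (n * K), ∀ j ∈ Ioi i,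
        Integrable (fun ω => min (P (e i).1 (e i).2 ω) (P (e j).1 (e j).2 ω)) μ :=
      fun i j hj => (hminfacts (e i) (e j)
        (e.injective.ne (ne_of_lt (mem_Ioi.1 hj)))).1
    rw [integral_add (integrable_finset_sum _ (fun j _ => hIntP (e j)))
      (integrable_finset_sum _ (fun i _ => integrable_finset_sum _ (hIminset i)))]
    congr 1
    · rw [integral_finset_sum _ (fun j _ => hIntP (e j))]
      exact sum_congr rfl fun j _ => hEP (e j)
    · rw [integral_finset_sum _ (fun i _ => integrable_finset_sum _ (hIminset i))]
      refine sum_congr rfl fun i _ => ?_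
      rw [integral_finset_sum _ (hIminset i)]
      exact sum_congr rfl fun j hj => (hminfacts (e i) (e j)
        (e.injective.ne (ne_of_lt (mem_Ioi.1 hj)))).2
  -- abbreviations
  set S : ℝ := ∑ l, lam l with hSdef
  set Tv : ℝ := ∑ l : Fin K, ((K : ℝ) - ((l : ℕ) + 1)) * lam l with hTdef
  set Mv : ℝ := ∑ l, ∑ k ∈ Finset.Ioi l, lam k * lam l / (lam k + lam l) with hMdef
  -- cast of interval cardinality
  have hcard : ∀ l : Fin K, ((Ioi l).card : ℝ) = (K : ℝ) - ((l : ℕ) + 1) := by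
    intro l
    rw [Fin.card_Ioi]
    have h1 : (l : ℕ) + 1 ≤ K := l.2
    have h2 : K - 1 - (l : ℕ) = K - ((l : ℕ) + 1) := by omega
    rw [h2, Nat.cast_sub h1]
    push_cast
    ring
  -- sum over all indices
  have hsumS : ∑ j : Fin (n * K), lam (e j).1 = (n : ℝ) * S :=
    reindex_single e lam
  -- FTPP pair sum
  have hminpair : ∑ i : Fin (n * K), ∑ _j ∈ Ioi i, lam (e i).1
      = (n : ℝ)^2 * Tv + ((n : ℝ)^2 - (n : ℝ))/2 * S := by
    have hrw : ∑ i : Fin (n * K), ∑ _j ∈ Ioi i, lam (e i).1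
        = ∑ i : Fin (n * K), ∑ j ∈ Ioi i, min (lam (e i).1) (lam (e j).1) := by
      refine sum_congr rfl fun i _ => sum_congr rfl fun j hj => ?_
      exact (min_eq_left (he i j (le_of_lt (mem_Ioi.1 hj)))).symm
    rw [hrw, pair_reduce e lam (fun x y => min x y) (fun x y => min_comm x y)]
    have hIoi : ∑ k : Fin K, ∑ l ∈ Ioi k, min (lam k) (lam l) = Tv := by
      rw [hTdef]
      refine sum_congr rfl fun k _ => ?_
      have : ∀ l ∈ Ioi k, min (lam k) (lam l) = lam k :=
        fun l hl => min_eq_left (hmono (le_of_lt (mem_Ioi.1 hl)))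
      rw [Finset.sum_congr rfl this, Finset.sum_const, nsmul_eq_mul, hcard k]
    have hdiag : ∑ k : Fin K, min (lam k) (lam k) = S := by
      simp [hSdef]
    rw [hIoi, hdiag]
  -- OPT pair sum
  have hhpair : ∑ i : Fin (n * K), ∑ j ∈ Ioi i,
        lam (e i).1 * lam (e j).1 / (lam (e i).1 + lam (e j).1)
      = (n : ℝ)^2 * Mv + ((n : ℝ)^2 - (n : ℝ))/2 * (S/2) := by
    rw [pair_reduce e lam (fun x y => x * y / (x + y))
      (fun x y => by rw [mul_comm, add_comm])]
    have hIoi : ∑ k : Fin K, ∑ l ∈ Ioi k, lam k * lam l / (lam k + lam l) = Mv := by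
      rw [hMdef]
      exact sum_congr rfl fun k _ => sum_congr rfl fun l _ => by ring
    have hdiag : ∑ k : Fin K, lam k * lam k / (lam k + lam k) = S / 2 := by
      have hstep : (∑ k : Fin K, lam k * lam k / (lam k + lam k))
          = ∑ k : Fin K, lam k / 2 :=
        sum_congr rfl fun k _ => by
          have h1 := (hpos k).ne'
          rw [div_eq_div_iff (ne_of_gt (by linarith [hpos k] : (0:ℝ) < lam k + lam k))
            (by norm_num : (2:ℝ) ≠ 0)]
          ring
      rw [hstep, ← Finset.sum_div, hSdef]
    rw [hIoi, hdiag]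
  -- final real inequality
  have hLHS : ∫ ω, CFTPP ω ∂μ
      = (n : ℝ) * S + ((n : ℝ)^2 * Tv + ((n : ℝ)^2 - (n : ℝ))/2 * S) := by
    rw [hICFTPP, sum_triangle (fun b => lam (e b).1), hsumS, hminpair]
  have hRHS : ∫ ω, COPT ω ∂μ
      = (n : ℝ) * S + ((n : ℝ)^2 * Mv + ((n : ℝ)^2 - (n : ℝ))/2 * (S/2)) := by
    rw [hICOPT, hsumS, hhpair]
  rw [hLHS, hRHS]
  -- scalar facts
  have hS : 0 < S := Finset.sum_pos (fun k _ => hpos k) ⟨⟨0, hK⟩, mem_univ _⟩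
  have hT0 : 0 ≤ Tv := by
    refine Finset.sum_nonneg fun l _ => mul_nonneg ?_ (hpos l).le
    have : ((l : ℕ) : ℝ) + 1 ≤ (K : ℝ) := by exact_mod_cast l.2
    linarith
  have hM0 : 0 ≤ Mv := by
    refine Finset.sum_nonneg fun l _ => Finset.sum_nonneg fun k _ => ?_
    exact div_nonneg (mul_nonneg (hpos k).le (hpos l).le)
      (add_pos (hpos k) (hpos l)).le
  have hMT : Mv ≤ Tv := by
    refine Finset.sum_le_sum fun l _ => ?_
    calc ∑ k ∈ Ioi l, lam k * lam l / (lam k + lam l)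
        ≤ ∑ k ∈ Ioi l, lam l := by
          refine Finset.sum_le_sum fun k _ => ?_
          rw [div_le_iff₀ (add_pos (hpos k) (hpos l))]
          nlinarith [sq_nonneg (lam l), (hpos k).le, (hpos l).le]
      _ = ((Ioi l).card : ℝ) * lam l := by rw [Finset.sum_const, nsmul_eq_mul]
      _ = ((K : ℝ) - ((l : ℕ) + 1)) * lam l := by rw [hcard l]
  have hD : 0 < S / 4 + Mv := by linarith
  have h4 : (∑ l : Fin K, lam l / 4) = S / 4 := by
    rw [← Finset.sum_div, hSdef]
  have hf' : f = (2 * Mv - Tv) / (S / 4 + Mv) := by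
    rw [hf, h4]
  have hn0 : (0 : ℝ) ≤ (n : ℝ) := Nat.cast_nonneg n
  exact final_ineq (n : ℝ) S Tv Mv f hS hT0 hM0 hMT hn0 hf'
end

section
/- There exist an integer K ≥ 1 and reals 0 < λ_1 ≤ λ_2 ≤ … ≤ λ_K such that ( (1/2)·Σ_{ℓ=1}^K λ_ℓ + Σ_{ℓ=1}^K (K − ℓ)·λ_ℓ ) / ( (1/4)·Σ_{ℓ=1}^K λ_ℓ + Σ_{ℓ=1}^K Σ_{k=ℓ+1}^K λ_k λ_ℓ/(λ_k + λ_ℓ) ) ≤ 1.274. -/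
open Finset


open Finset Real

-- arctan difference bound
lemma arctan_sub_le {x y : ℝ} (hx : 0 ≤ x) (hxy : x ≤ y) :
    Real.arctan y - Real.arctan x ≤ (y - x) / (1 + x ^ 2) := by
  rw [← integral_one_div_one_add_sq]
  have hint : ∀ a b : ℝ, IntervalIntegrable (fun t : ℝ => 1 / (1 + t ^ 2)) MeasureTheory.volume a b := by
    intro a b
    exact (continuous_const.div (by continuity) (fun t => by positivity)).intervalIntegrable _ _
  have h1 : (∫ t in x..y, 1 / (1 + t ^ 2)) ≤ ∫ _t in x..y, 1 / (1 + x ^ 2) := by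
    apply intervalIntegral.integral_mono_on hxy (hint x y) (by simp [intervalIntegrable_const])
    intro t ht
    have h2 : x ≤ t := ht.1
    have : 1 + x ^ 2 ≤ 1 + t ^ 2 := by nlinarith
    apply one_div_le_one_div_of_le (by positivity) this
  have h2 : (∫ _t in x..y, 1 / (1 + x ^ 2)) = (y - x) * (1 / (1 + x ^ 2)) := by
    simp [intervalIntegral.integral_const]
  rw [h2] at h1
  calc (∫ t in x..y, 1 / (1 + t ^ 2)) ≤ (y - x) * (1 / (1 + x ^ 2)) := h1
    _ = (y - x) / (1 + x ^ 2) := by ring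

lemma arctan_le_self' {x : ℝ} (hx : 0 ≤ x) : Real.arctan x ≤ x := by
  have := arctan_sub_le (le_refl 0) hx
  simpa using this

-- inner sum lower bound
lemma inner_sum_ge {b : ℕ} (hb : 1 ≤ b) :
    Real.pi / (4 * b) - 1 / (b : ℝ) ^ 2 ≤
      ∑ a ∈ Finset.Icc 1 (b - 1), 1 / ((a : ℝ) ^ 2 + (b : ℝ) ^ 2) := by
  have hB : (0 : ℝ) < (b : ℝ) := by exact_mod_cast hb
  have key : ∀ a : ℕ,
      (1 / (b : ℝ)) * (Real.arctan (((a : ℝ) + 1) / b) - Real.arctan ((a : ℝ) / b))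
        ≤ 1 / ((a : ℝ) ^ 2 + (b : ℝ) ^ 2) := by
    intro a
    have hA : (0 : ℝ) ≤ (a : ℝ) / b := by positivity
    have hle : (a : ℝ) / b ≤ ((a : ℝ) + 1) / b := by
      gcongr
      linarith
    have h1 := arctan_sub_le hA hle
    have h2 : (((a : ℝ) + 1) / b - (a : ℝ) / b) / (1 + ((a : ℝ) / b) ^ 2)
        = (b : ℝ) / ((a : ℝ) ^ 2 + (b : ℝ) ^ 2) := by
      rw [div_eq_div_iff (by positivity) (by positivity)]
      field_simp
      ring
    rw [h2] at h1
    calc (1 / (b : ℝ)) * (Real.arctan (((a : ℝ) + 1) / b) - Real.arctan ((a : ℝ) / b))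
        ≤ (1 / (b : ℝ)) * ((b : ℝ) / ((a : ℝ) ^ 2 + (b : ℝ) ^ 2)) := by
          apply mul_le_mul_of_nonneg_left h1 (by positivity)
      _ = 1 / ((a : ℝ) ^ 2 + (b : ℝ) ^ 2) := by
          field_simp
  -- telescoping sum
  have tele : ∑ a ∈ Finset.Icc 1 (b - 1),
      (1 / (b : ℝ)) * (Real.arctan (((a : ℝ) + 1) / b) - Real.arctan ((a : ℝ) / b))
      = (1 / (b : ℝ)) * (Real.pi / 4 - Real.arctan (1 / b)) := by
    rw [← Finset.mul_sum]
    congr 1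
    have hIcc : Finset.Icc 1 (b - 1) = Finset.Ico 1 b := by
      rw [← Finset.Ico_add_one_right_eq_Icc]
      congr 1
      omega
    rw [hIcc, Finset.sum_Ico_eq_sum_range]
    have : ∀ i : ℕ, Real.arctan ((((1 + i : ℕ) : ℝ) + 1) / b) - Real.arctan (((1 + i : ℕ) : ℝ) / b)
        = (fun j : ℕ => Real.arctan (((j : ℝ) + 1) / b)) (i + 1)
          - (fun j : ℕ => Real.arctan (((j : ℝ) + 1) / b)) i := by
      intro i
      push_cast
      ring_nf
    rw [Finset.sum_congr rfl (fun i _ => this i), Finset.sum_range_sub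
      (fun j : ℕ => Real.arctan (((j : ℝ) + 1) / b))]
    have hcast : (((b - 1 : ℕ) : ℝ) + 1) = (b : ℝ) := by
      have : (b - 1 : ℕ) + 1 = b := by omega
      exact_mod_cast congrArg (Nat.cast : ℕ → ℝ) this
    rw [hcast]
    rw [div_self (ne_of_gt hB)]
    simp [Real.arctan_one]
  have step1 : (1 / (b : ℝ)) * (Real.pi / 4 - Real.arctan (1 / b))
      ≤ ∑ a ∈ Finset.Icc 1 (b - 1), 1 / ((a : ℝ) ^ 2 + (b : ℝ) ^ 2) := by
    rw [← tele]
    exact Finset.sum_le_sum (fun a _ => key a)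
  have step2 : Real.pi / (4 * b) - 1 / (b : ℝ) ^ 2
      ≤ (1 / (b : ℝ)) * (Real.pi / 4 - Real.arctan (1 / b)) := by
    have harc : Real.arctan (1 / b) ≤ 1 / b := arctan_le_self' (by positivity)
    have : (1 / (b : ℝ)) * (Real.pi / 4 - 1 / b)
        ≤ (1 / (b : ℝ)) * (Real.pi / 4 - Real.arctan (1 / b)) := by
      apply mul_le_mul_of_nonneg_left (by linarith) (by positivity)
    calc Real.pi / (4 * b) - 1 / (b : ℝ) ^ 2
        = (1 / (b : ℝ)) * (Real.pi / 4 - 1 / b) := by field_simp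
      _ ≤ _ := this
  linarith

lemma sum_reflect (K : ℕ) (f : ℕ → ℝ) :
    ∑ l ∈ Finset.Icc 1 K, f (K + 1 - l) = ∑ j ∈ Finset.Icc 1 K, f j := by
  apply Finset.sum_nbij' (fun l => K + 1 - l) (fun j => K + 1 - j) <;>
    (intro a ha; simp only [Finset.mem_Icc] at *) <;> first | omega | (congr 1; omega)

lemma S_le_two : ∀ K : ℕ, 1 ≤ K → ∑ j ∈ Finset.Icc 1 K, ((j : ℝ))⁻¹ ^ 2 ≤ 2 - ((K : ℝ))⁻¹ := by
  intro K
  induction K with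
  | zero => intro h; omega
  | succ n ih =>
    intro _
    rcases Nat.eq_zero_or_pos n with h0 | hpos
    · subst h0; norm_num
    · rw [Finset.sum_Icc_succ_top (by omega)]
      have h1 := ih hpos
      have hn : (0 : ℝ) < (n : ℝ) := by exact_mod_cast hpos
      have h2 : (((n + 1 : ℕ) : ℝ))⁻¹ ^ 2 ≤ (n : ℝ)⁻¹ - (((n + 1 : ℕ) : ℝ))⁻¹ := by
        push_cast
        have e : (n : ℝ)⁻¹ - ((n : ℝ) + 1)⁻¹ = ((n : ℝ) * ((n : ℝ) + 1))⁻¹ := by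
          field_simp
          ring
        rw [e, inv_pow]
        apply inv_anti₀ (by positivity)
        nlinarith
      push_cast at *
      linarith

lemma one_le_S {K : ℕ} (hK : 1 ≤ K) : 1 ≤ ∑ j ∈ Finset.Icc 1 K, ((j : ℝ))⁻¹ ^ 2 := by
  have h := Finset.single_le_sum (f := fun j : ℕ => ((j : ℝ))⁻¹ ^ 2)
    (fun i _ => by positivity) (Finset.mem_Icc.mpr ⟨le_refl 1, hK⟩)
  simpa using h

lemma H_ge_2400 : (2400 : ℝ) ≤ ∑ j ∈ Finset.Icc 1 (2 ^ 3500 : ℕ), ((j : ℝ))⁻¹ := by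
  have h1 := log_add_one_le_harmonic (2 ^ 3500)
  have h2 : ((harmonic (2 ^ 3500) : ℚ) : ℝ) = ∑ j ∈ Finset.Icc 1 (2 ^ 3500 : ℕ), ((j : ℝ))⁻¹ := by
    rw [harmonic_eq_sum_Icc]
    push_cast
    rfl
  rw [h2] at h1
  refine le_trans ?_ h1
  have h3 : Real.log ((2 : ℝ) ^ 3500) ≤ Real.log (((2 ^ 3500 + 1 : ℕ) : ℝ)) := by
    apply Real.log_le_log (by positivity)
    push_cast
    linarith
  refine le_trans ?_ h3
  rw [Real.log_pow]
  have := Real.log_two_gt_d9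
  push_cast
  nlinarith

lemma main_bound (K : ℕ) (hK1 : 1 ≤ K)
    (hHge : (2400 : ℝ) ≤ ∑ j ∈ Finset.Icc 1 K, ((j : ℝ))⁻¹) :
    ∃ lam : ℕ → ℝ,
      (∀ k ∈ Finset.Icc 1 K, 0 < lam k) ∧
      (∀ k l, 1 ≤ k → k ≤ l → l ≤ K → lam k ≤ lam l) ∧
      ((1 / 2) * (∑ l ∈ Finset.Icc 1 K, lam l) +
          ∑ l ∈ Finset.Icc 1 K, ((K : ℝ) - l) * lam l) /
        ((1 / 4) * (∑ l ∈ Finset.Icc 1 K, lam l) +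
          ∑ l ∈ Finset.Icc 1 K, ∑ k ∈ Finset.Icc (l + 1) K,
            lam k * lam l / (lam k + lam l)) ≤ 1.274 := by
  set lam : ℕ → ℝ := fun l => (((K + 1 - l : ℕ) : ℝ))⁻¹ ^ 2 with hlam
  refine ⟨lam, ?_, ?_, ?_⟩
  · intro k hk
    rw [Finset.mem_Icc] at hk
    have h1 : (0 : ℝ) < ((K + 1 - k : ℕ) : ℝ) := by
      have : 0 < K + 1 - k := by omega
      exact_mod_cast this
    positivity
  · intro k l hk hkl hlK
    have h1 : ((K + 1 - l : ℕ) : ℝ) ≤ ((K + 1 - k : ℕ) : ℝ) := by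
      have : K + 1 - l ≤ K + 1 - k := by omega
      exact_mod_cast this
    have h2 : (0 : ℝ) < ((K + 1 - l : ℕ) : ℝ) := by
      have : 0 < K + 1 - l := by omega
      exact_mod_cast this
    have h3 : (((K + 1 - k : ℕ) : ℝ))⁻¹ ≤ (((K + 1 - l : ℕ) : ℝ))⁻¹ :=
      inv_anti₀ h2 h1
    simp only [hlam]
    apply pow_le_pow_left₀ (by positivity) h3
  · -- main estimate
    set S : ℝ := ∑ j ∈ Finset.Icc 1 K, ((j : ℝ))⁻¹ ^ 2 with hS
    set H : ℝ := ∑ j ∈ Finset.Icc 1 K, ((j : ℝ))⁻¹ with hH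
    set T : ℝ := ∑ b ∈ Finset.Icc 1 K, ∑ a ∈ Finset.Icc 1 (b - 1),
      1 / ((a : ℝ) ^ 2 + (b : ℝ) ^ 2) with hT
    -- (1) sum of lam
    have e1 : ∑ l ∈ Finset.Icc 1 K, lam l = S :=
      sum_reflect K (fun j => ((j : ℝ))⁻¹ ^ 2)
    -- (2) weighted sum
    have e2 : ∑ l ∈ Finset.Icc 1 K, ((K : ℝ) - l) * lam l = H - S := by
      have step1 : ∑ l ∈ Finset.Icc 1 K, ((K : ℝ) - l) * lam l
          = ∑ l ∈ Finset.Icc 1 K,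
            (fun j : ℕ => ((j : ℝ) - 1) * ((j : ℝ))⁻¹ ^ 2) (K + 1 - l) := by
        apply Finset.sum_congr rfl
        intro l hl
        rw [Finset.mem_Icc] at hl
        have hcast : ((K + 1 - l : ℕ) : ℝ) = (K : ℝ) + 1 - (l : ℝ) := by
          have h' : l ≤ K + 1 := by omega
          push_cast [Nat.cast_sub h']
          ring
        simp only [hlam, hcast]
        ring
      rw [step1, sum_reflect K (fun j : ℕ => ((j : ℝ) - 1) * ((j : ℝ))⁻¹ ^ 2)]
      have step2 : ∀ j ∈ Finset.Icc 1 K,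
          ((j : ℝ) - 1) * ((j : ℝ))⁻¹ ^ 2 = (j : ℝ)⁻¹ - ((j : ℝ))⁻¹ ^ 2 := by
        intro j hj
        rw [Finset.mem_Icc] at hj
        have : (0 : ℝ) < (j : ℝ) := by exact_mod_cast hj.1
        field_simp
      rw [Finset.sum_congr rfl step2, Finset.sum_sub_distrib]
    -- (3) double sum
    have e3 : ∑ l ∈ Finset.Icc 1 K, ∑ k ∈ Finset.Icc (l + 1) K,
        lam k * lam l / (lam k + lam l) = T := by
      have outer : ∑ l ∈ Finset.Icc 1 K, ∑ k ∈ Finset.Icc (l + 1) K,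
          lam k * lam l / (lam k + lam l)
          = ∑ b ∈ Finset.Icc 1 K, ∑ k ∈ Finset.Icc ((K + 1 - b) + 1) K,
            lam k * lam (K + 1 - b) / (lam k + lam (K + 1 - b)) :=
        (sum_reflect K (fun l => ∑ k ∈ Finset.Icc (l + 1) K,
          lam k * lam l / (lam k + lam l))).symm
      rw [outer, hT]
      apply Finset.sum_congr rfl
      intro b hb
      rw [Finset.mem_Icc] at hb
      apply Finset.sum_nbij' (fun k => K + 1 - k) (fun a => K + 1 - a)
      · intro k hk; rw [Finset.mem_Icc] at *; omega
      · intro a ha; rw [Finset.mem_Icc] at *; omega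
      · intro k hk; rw [Finset.mem_Icc] at hk; omega
      · intro a ha; rw [Finset.mem_Icc] at ha; omega
      · intro k hk
        rw [Finset.mem_Icc] at hk
        have hk1 : K + 1 - (K + 1 - k) = k := by omega
        have hb1 : K + 1 - (K + 1 - b) = b := by omega
        have hkpos : (0 : ℝ) < ((K + 1 - k : ℕ) : ℝ) := by
          have : 0 < K + 1 - k := by omega
          exact_mod_cast this
        have hbpos : (0 : ℝ) < ((b : ℕ) : ℝ) := by
          have : 0 < b := by omega
          exact_mod_cast this
        simp only [hlam, hk1, hb1]
        set x : ℝ := ((K + 1 - k : ℕ) : ℝ)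
        set y : ℝ := ((b : ℕ) : ℝ)
        rw [div_eq_div_iff (by positivity) (by positivity)]
        field_simp
        ring
    -- (4) lower bound for T
    have e4 : Real.pi / 4 * H - S ≤ T := by
      have hb : ∀ b ∈ Finset.Icc 1 K,
          Real.pi / 4 * ((b : ℝ))⁻¹ - ((b : ℝ))⁻¹ ^ 2
            ≤ ∑ a ∈ Finset.Icc 1 (b - 1), 1 / ((a : ℝ) ^ 2 + (b : ℝ) ^ 2) := by
        intro b hbm
        rw [Finset.mem_Icc] at hbm
        have h := inner_sum_ge hbm.1
        have hBpos : (0 : ℝ) < (b : ℝ) := by exact_mod_cast hbm.1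
        have h1 : Real.pi / (4 * (b : ℝ)) = Real.pi / 4 * ((b : ℝ))⁻¹ := by
          field_simp
        have h2 : 1 / (b : ℝ) ^ 2 = ((b : ℝ))⁻¹ ^ 2 := by
          field_simp
        rw [h1, h2] at h
        exact h
      have := Finset.sum_le_sum hb
      rw [hT]
      refine le_trans (le_of_eq ?_) this
      rw [Finset.sum_sub_distrib, ← Finset.mul_sum, hH, hS]
    -- (5) numerics
    have hS2 : S ≤ 2 := by
      have := S_le_two K hK1
      have hKpos : (0 : ℝ) < (K : ℝ) := by exact_mod_cast hK1
      have : (0 : ℝ) < ((K : ℝ))⁻¹ := by positivity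
      linarith [S_le_two K hK1]
    have hS1 : (1 : ℝ) ≤ S := one_le_S hK1
    have hpi := Real.pi_gt_d6
    rw [e1, e2, e3]
    have hden_ge : Real.pi / 4 * H - 3 / 4 * S ≤ 1 / 4 * S + T := by linarith
    have hden_pos : (0 : ℝ) < 1 / 4 * S + T := by nlinarith
    rw [div_le_iff₀ hden_pos]
    have hnum : 1 / 2 * S + (H - S) = H - S / 2 := by ring
    rw [hnum]
    nlinarith [mul_le_mul_of_nonneg_left hden_ge (by norm_num : (0:ℝ) ≤ 1.274),
      mul_le_mul_of_nonneg_right hpi.le (by linarith : (0:ℝ) ≤ H)]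


/-- There exist `K ≥ 1` and `0 < λ_1 ≤ … ≤ λ_K` for which the FTPP
competitive-ratio bound `2 - f_K(λ)` is at most `1.274`. -/
theorem stmt_7 :
    ∃ (K : ℕ), 1 ≤ K ∧ ∃ lam : ℕ → ℝ,
      (∀ k ∈ Finset.Icc 1 K, 0 < lam k) ∧
      (∀ k l, 1 ≤ k → k ≤ l → l ≤ K → lam k ≤ lam l) ∧
      ((1 / 2) * (∑ l ∈ Finset.Icc 1 K, lam l) +
          ∑ l ∈ Finset.Icc 1 K, ((K : ℝ) - l) * lam l) /
        ((1 / 4) * (∑ l ∈ Finset.Icc 1 K, lam l) +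
          ∑ l ∈ Finset.Icc 1 K, ∑ k ∈ Finset.Icc (l + 1) K,
            lam k * lam l / (lam k + lam l)) ≤ 1.274 := by
  exact ⟨2 ^ 3500, Nat.one_le_two_pow, main_bound (2 ^ 3500) Nat.one_le_two_pow H_ge_2400⟩
end

section
/- Let H_K = Σ_{k=1}^K 1/k, B_K = Σ_{k=1}^K 1/k², and A_K = Σ_{k=1}^K Σ_{ℓ=1}^{k−1} 1/(k² + ℓ²). Then for every K ≥ 1, (π/4)·H_K − B_K ≤ A_K ≤ (π/4)·H_K. -/
open Finset

lemma my_integ (c : ℝ) (hc : 0 < c) (a b : ℝ) :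
    ∫ x in a..b, 1 / (c ^ 2 + x ^ 2) =
      (1 / c) * (Real.arctan (b / c) - Real.arctan (a / c)) := by
  have hcont : Continuous fun x : ℝ => 1 / (c ^ 2 + x ^ 2) := by
    apply Continuous.div continuous_const (by continuity)
    intro x; positivity
  have h : ∀ x : ℝ, HasDerivAt (fun y => (1 / c) * Real.arctan (y / c))
      (1 / (c ^ 2 + x ^ 2)) x := by
    intro x
    have h1 : HasDerivAt (fun y : ℝ => y / c) (1 / c) x := by
      simpa using (hasDerivAt_id x).div_const c
    have h2 := (Real.hasDerivAt_arctan (x / c)).comp x h1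
    have h3 := h2.const_mul (1 / c)
    refine h3.congr_deriv ?_
    field_simp
  rw [intervalIntegral.integral_eq_sub_of_hasDerivAt (fun x _ => h x)
    (hcont.intervalIntegrable a b)]
  ring

lemma my_anti (c : ℝ) (hc : 0 < c) :
    AntitoneOn (fun x : ℝ => 1 / (c ^ 2 + x ^ 2)) (Set.Ici 0) := by
  intro a ha b hb hab
  simp only
  apply one_div_le_one_div_of_le (by positivity)
  have : a ^ 2 ≤ b ^ 2 := by nlinarith [Set.mem_Ici.1 ha]
  linarith

lemma my_key (k : ℕ) (hk : 1 ≤ k) :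
    Real.pi / 4 * (1 / k) - 1 / (k : ℝ) ^ 2 ≤
      (∑ l ∈ Finset.Icc 1 (k - 1), (1 : ℝ) / ((k : ℝ) ^ 2 + (l : ℝ) ^ 2)) ∧
    (∑ l ∈ Finset.Icc 1 (k - 1), (1 : ℝ) / ((k : ℝ) ^ 2 + (l : ℝ) ^ 2)) ≤
      Real.pi / 4 * (1 / k) := by
  set c : ℝ := (k : ℝ) with hc_def
  have hk0 : 0 < k := hk
  have hc : 0 < c := by rw [hc_def]; exact_mod_cast hk0
  set f : ℝ → ℝ := fun x => 1 / (c ^ 2 + x ^ 2) with hf_def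
  have hcast : ((k - 1 : ℕ) : ℝ) = c - 1 := by
    rw [Nat.cast_sub hk]; simp [hc_def]
  -- rewrite the sum as a range sum
  have hsum : (∑ l ∈ Finset.Icc 1 (k - 1), (1 : ℝ) / ((k : ℝ) ^ 2 + (l : ℝ) ^ 2)) =
      ∑ i ∈ Finset.range (k - 1), f ((1 : ℕ) + (i : ℕ)) := by
    rw [show Finset.Icc 1 (k-1) = Finset.Ico 1 k by
      rw [← Finset.Ico_add_one_right_eq_Icc]; congr 1; omega]
    rw [Finset.sum_Ico_eq_sum_range]
    simp only [hf_def]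
    refine Finset.sum_congr rfl fun i _ => ?_
    push_cast; rw [hc_def]
  constructor
  · -- lower bound
    have hanti : AntitoneOn f (Set.Icc (1 : ℝ) (1 + (k - 1 : ℕ))) := by
      apply (my_anti c hc).mono
      intro x hx
      have := hx.1
      simp only [Set.mem_Ici]; linarith
    have h1 := hanti.integral_le_sum
    have hint : ∫ x in (1 : ℝ)..(1 + (k - 1 : ℕ)), f x =
        (1 / c) * (Real.arctan 1 - Real.arctan (1 / c)) := by
      rw [hf_def, my_integ c hc, hcast]
      have : (1 + (c - 1)) / c = 1 := by field_simp; ring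
      rw [this]
    rw [hint] at h1
    have harct : Real.arctan (1 / c) ≤ 1 / c := by
      have h0 : 0 ≤ Real.arctan (1 / c) := by
        rw [← Real.arctan_zero]
        exact Real.arctan_strictMono.monotone (by positivity)
      have := Real.le_tan h0 (Real.arctan_lt_pi_div_two _)
      rwa [Real.tan_arctan] at this
    have h2 : Real.pi / 4 * (1 / c) - 1 / c ^ 2 ≤
        (1 / c) * (Real.arctan 1 - Real.arctan (1 / c)) := by
      rw [Real.arctan_one]
      have : (1 / c) * Real.arctan (1 / c) ≤ 1 / c ^ 2 := by
        have := mul_le_mul_of_nonneg_left harct (le_of_lt (one_div_pos.2 hc))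
        calc (1 / c) * Real.arctan (1 / c) ≤ (1 / c) * (1 / c) := this
          _ = 1 / c ^ 2 := by ring
      nlinarith
    rw [hsum]
    refine le_trans h2 (le_trans h1 ?_)
    refine le_of_eq (Finset.sum_congr rfl fun i _ => ?_)
    push_cast; ring_nf
  · -- upper bound
    have hanti : AntitoneOn f (Set.Icc (0 : ℝ) (0 + (k - 1 : ℕ))) := by
      apply (my_anti c hc).mono
      intro x hx
      exact hx.1
    have h1 := hanti.sum_le_integral
    have hint : ∫ x in (0 : ℝ)..(0 + (k - 1 : ℕ)), f x =
        (1 / c) * Real.arctan ((c - 1) / c) := by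
      rw [hf_def, my_integ c hc, hcast]
      simp
    rw [hint] at h1
    have h2 : (1 / c) * Real.arctan ((c - 1) / c) ≤ Real.pi / 4 * (1 / c) := by
      have harct : Real.arctan ((c - 1) / c) ≤ Real.pi / 4 := by
        rw [← Real.arctan_one]
        apply Real.arctan_strictMono.monotone
        rw [div_le_one hc]; linarith
      nlinarith [one_div_pos.2 hc]
    rw [hsum]
    refine le_trans (le_trans (le_of_eq ?_) h1) h2
    refine Finset.sum_congr rfl fun i _ => ?_
    push_cast; ring_nf

/-- `(π/4)·H_K − B_K ≤ A_K ≤ (π/4)·H_K` for every `K ≥ 1`. -/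
theorem stmt_9 (K : ℕ) (hK : 1 ≤ K)
    (H B A : ℝ)
    (hH : H = ∑ k ∈ Finset.Icc 1 K, (1 : ℝ) / k)
    (hB : B = ∑ k ∈ Finset.Icc 1 K, (1 : ℝ) / (k : ℝ) ^ 2)
    (hA : A = ∑ k ∈ Finset.Icc 1 K, ∑ l ∈ Finset.Icc 1 (k - 1),
      (1 : ℝ) / ((k : ℝ) ^ 2 + (l : ℝ) ^ 2)) :
    Real.pi / 4 * H - B ≤ A ∧ A ≤ Real.pi / 4 * H := by
  subst hH hB hA
  constructor
  · rw [Finset.mul_sum, ← Finset.sum_sub_distrib]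
    refine Finset.sum_le_sum fun k hk => ?_
    have h := (my_key k (Finset.mem_Icc.1 hk).1).1
    linarith [h]
  · rw [Finset.mul_sum]
    refine Finset.sum_le_sum fun k hk => ?_
    have h := (my_key k (Finset.mem_Icc.1 hk).1).2
    linarith [h]
end

section
/- Let a > 0 and b > 0, and let g : [0, ∞) → [0, ∞) be a measurable function satisfying 0 ≤ g(t) ≤ t for all t ≥ 0. Then max( ∫_0^∞ exp(−g(t)/a − (t − g(t))/b) dt , ∫_0^∞ exp(−g(t)/b − (t − g(t))/a) dt ) ≥ 2ab/(a + b). -/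
open MeasureTheory Real

lemma int_exp_neg_mul (c : ℝ) (hc : 0 < c) :
    ∫ x in Set.Ioi (0 : ℝ), Real.exp (-c * x) = c⁻¹ := by
  have h := integral_exp_neg_mul_rpow one_pos hc
  simp only [Real.rpow_one] at h
  rw [h]
  have : (1 : ℝ) / 1 + 1 = 2 := by norm_num
  rw [this, Real.Gamma_two]
  rw [show (-1 : ℝ) / 1 = -1 by norm_num, Real.rpow_neg_one]
  ring

/-- For any measurable allocation `g` with `0 ≤ g t ≤ t`, at least one of the two
assignments of exponential means `a, b` yields an expected mutual delay of at
least `2ab/(a+b)`. -/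
theorem stmt_12
    (a b : ℝ) (ha : 0 < a) (hb : 0 < b)
    (g : ℝ → ℝ) (hg : Measurable g)
    (hg0 : ∀ t, 0 ≤ t → 0 ≤ g t) (hgt : ∀ t, 0 ≤ t → g t ≤ t) :
    2 * a * b / (a + b) ≤
      max (∫ t in Set.Ioi (0 : ℝ), Real.exp (-(g t) / a - (t - g t) / b))
        (∫ t in Set.Ioi (0 : ℝ), Real.exp (-(g t) / b - (t - g t) / a)) := by
  obtain ⟨d, hd⟩ : ∃ d : ℝ, d = min (1/a) (1/b) := ⟨_, rfl⟩
  have hdpos : 0 < d := hd ▸ lt_min (by positivity) (by positivity)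
  have hda : d ≤ 1/a := hd ▸ min_le_left _ _
  have hdb : d ≤ 1/b := hd ▸ min_le_right _ _
  obtain ⟨c, hc⟩ : ∃ c : ℝ, c = (a + b) / (2 * a * b) := ⟨_, rfl⟩
  have hcpos : 0 < c := by rw [hc]; positivity
  -- pointwise upper bounds on Ioi 0
  have hbound1 : ∀ t ∈ Set.Ioi (0:ℝ),
      Real.exp (-(g t) / a - (t - g t) / b) ≤ Real.exp (-d * t) := by
    intro t ht
    have ht' : (0:ℝ) ≤ t := le_of_lt ht
    have h0 := hg0 t ht'
    have h1 := hgt t ht'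
    apply Real.exp_le_exp.2
    have e1 : d * g t ≤ g t / a := by
      rw [div_eq_mul_inv, ← one_div]; nlinarith
    have e2 : d * (t - g t) ≤ (t - g t) / b := by
      rw [div_eq_mul_inv, ← one_div]; nlinarith
    rw [neg_div]
    linarith
  have hbound2 : ∀ t ∈ Set.Ioi (0:ℝ),
      Real.exp (-(g t) / b - (t - g t) / a) ≤ Real.exp (-d * t) := by
    intro t ht
    have ht' : (0:ℝ) ≤ t := le_of_lt ht
    have h0 := hg0 t ht'
    have h1 := hgt t ht'
    apply Real.exp_le_exp.2
    have e1 : d * g t ≤ g t / b := by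
      rw [div_eq_mul_inv, ← one_div]; nlinarith
    have e2 : d * (t - g t) ≤ (t - g t) / a := by
      rw [div_eq_mul_inv, ← one_div]; nlinarith
    rw [neg_div]
    linarith
  have hmeas1 : Measurable (fun t => Real.exp (-(g t) / a - (t - g t) / b)) :=
    Real.measurable_exp.comp
      ((hg.neg.div_const a).sub ((measurable_id.sub hg).div_const b))
  have hmeas2 : Measurable (fun t => Real.exp (-(g t) / b - (t - g t) / a)) :=
    Real.measurable_exp.comp
      ((hg.neg.div_const b).sub ((measurable_id.sub hg).div_const a))
  have hintD : IntegrableOn (fun t => Real.exp (-d * t)) (Set.Ioi (0:ℝ)) :=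
    exp_neg_integrableOn_Ioi 0 hdpos
  have hint1 : IntegrableOn (fun t => Real.exp (-(g t) / a - (t - g t) / b))
      (Set.Ioi (0:ℝ)) := by
    apply Integrable.mono hintD hmeas1.aestronglyMeasurable
    filter_upwards [ae_restrict_mem measurableSet_Ioi] with t ht
    rw [Real.norm_eq_abs, Real.norm_eq_abs, abs_of_pos (Real.exp_pos _),
      abs_of_pos (Real.exp_pos _)]
    exact hbound1 t ht
  have hint2 : IntegrableOn (fun t => Real.exp (-(g t) / b - (t - g t) / a))
      (Set.Ioi (0:ℝ)) := by
    apply Integrable.mono hintD hmeas2.aestronglyMeasurable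
    filter_upwards [ae_restrict_mem measurableSet_Ioi] with t ht
    rw [Real.norm_eq_abs, Real.norm_eq_abs, abs_of_pos (Real.exp_pos _),
      abs_of_pos (Real.exp_pos _)]
    exact hbound2 t ht
  -- pointwise AM-GM lower bound
  have hlow : ∀ t ∈ Set.Ioi (0:ℝ), 2 * Real.exp (-c * t) ≤
      Real.exp (-(g t) / a - (t - g t) / b) + Real.exp (-(g t) / b - (t - g t) / a) := by
    intro t _
    obtain ⟨u, hu⟩ : ∃ u : ℝ, u = -(g t) / a - (t - g t) / b := ⟨_, rfl⟩
    obtain ⟨v, hv⟩ : ∃ v : ℝ, v = -(g t) / b - (t - g t) / a := ⟨_, rfl⟩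
    have huv : u + v = -2 * c * t := by
      rw [hu, hv, hc]
      field_simp
      ring
    have key : -c * t = (u + v) / 2 := by rw [huv]; ring
    rw [key, ← hu, ← hv]
    have he1 : Real.exp (u/2) ^ 2 = Real.exp u := by
      rw [sq, ← Real.exp_add]; ring_nf
    have he2 : Real.exp (v/2) ^ 2 = Real.exp v := by
      rw [sq, ← Real.exp_add]; ring_nf
    have he3 : Real.exp (u/2) * Real.exp (v/2) = Real.exp ((u+v)/2) := by
      rw [← Real.exp_add]; ring_nf
    nlinarith [sq_nonneg (Real.exp (u/2) - Real.exp (v/2)), Real.exp_pos (u/2),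
      Real.exp_pos (v/2)]
  -- integrate
  have hintC : IntegrableOn (fun t => 2 * Real.exp (-c * t)) (Set.Ioi (0:ℝ)) :=
    (exp_neg_integrableOn_Ioi 0 hcpos).const_mul 2
  have hmono : (∫ t in Set.Ioi (0:ℝ), 2 * Real.exp (-c * t)) ≤
      ∫ t in Set.Ioi (0:ℝ), (Real.exp (-(g t) / a - (t - g t) / b) +
        Real.exp (-(g t) / b - (t - g t) / a)) :=
    setIntegral_mono_on hintC (hint1.add hint2) measurableSet_Ioi hlow
  have hsplit : (∫ t in Set.Ioi (0:ℝ), (Real.exp (-(g t) / a - (t - g t) / b) +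
        Real.exp (-(g t) / b - (t - g t) / a))) =
      (∫ t in Set.Ioi (0:ℝ), Real.exp (-(g t) / a - (t - g t) / b)) +
        ∫ t in Set.Ioi (0:ℝ), Real.exp (-(g t) / b - (t - g t) / a) :=
    integral_add hint1 hint2
  have hval : (∫ t in Set.Ioi (0:ℝ), 2 * Real.exp (-c * t)) = 2 * c⁻¹ := by
    rw [integral_const_mul, int_exp_neg_mul c hcpos]
  have hcinv : c⁻¹ = 2 * a * b / (a + b) := by
    rw [hc]
    rw [inv_div]
  have hsum : 2 * (2 * a * b / (a + b)) ≤
      (∫ t in Set.Ioi (0:ℝ), Real.exp (-(g t) / a - (t - g t) / b)) +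
        ∫ t in Set.Ioi (0:ℝ), Real.exp (-(g t) / b - (t - g t) / a) := by
    rw [← hcinv, ← hval, ← hsplit]
    exact hmono
  have h1 := le_max_left (∫ t in Set.Ioi (0:ℝ), Real.exp (-(g t) / a - (t - g t) / b))
    (∫ t in Set.Ioi (0:ℝ), Real.exp (-(g t) / b - (t - g t) / a))
  have h2 := le_max_right (∫ t in Set.Ioi (0:ℝ), Real.exp (-(g t) / a - (t - g t) / b))
    (∫ t in Set.Ioi (0:ℝ), Real.exp (-(g t) / b - (t - g t) / a))
  linarith
end

section
/- Let X_1, X_2, … be a sequence of independent Bernoulli random variables with mean μ ∈ (0,1), and let μ̂_s = (1/s)·Σ_{t=1}^s X_t. Let a > 0 and μ' ∈ (μ, 1), and define κ = Σ_{s=1}^∞ 1{ d̲(μ̂_s, μ') ≤ a/s }, where d̲(p, q) = d(p, q)·1{p ≤ q} and d(p, q) = p·log(p/q) + (1−p)·log((1−p)/(1−q)) is the Kullback–Leibler divergence between Bernoulli distributions of means p and q. Then for every ε ∈ (0, μ' − μ): E[κ] ≤ a/d(μ + ε, μ') + 1/d(μ + ε, μ). -/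
open MeasureTheory ProbabilityTheory Finset
open scoped ENNReal

open Real

lemma klAux_strictAnti {q : ℝ} (hq0 : 0 < q) (hq1 : q < 1) :
    StrictAntiOn (fun x => x * Real.log (x / q) + (1 - x) * Real.log ((1 - x) / (1 - q)))
      (Set.Icc 0 q) := by
  have h1q : 0 < 1 - q := by linarith
  set g : ℝ → ℝ := fun x => x * Real.log x - x * Real.log q +
      ((1 - x) * Real.log (1 - x) - (1 - x) * Real.log (1 - q)) with hg
  have hganti : StrictAntiOn g (Set.Icc 0 q) := by
    apply strictAntiOn_of_deriv_neg (convex_Icc 0 q)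
    · apply Continuous.continuousOn
      have c1 : Continuous fun x : ℝ => (1 : ℝ) - x := by continuity
      exact ((Real.continuous_mul_log).sub (continuous_id.mul continuous_const)).add
        (((Real.continuous_mul_log).comp c1).sub (c1.mul continuous_const))
    · intro x hx
      rw [interior_Icc] at hx
      obtain ⟨hx0, hxq⟩ := hx
      have hx1 : x < 1 := lt_trans hxq hq1
      have hd : HasDerivAt g ((Real.log x + 1) - Real.log q +
          (-(Real.log (1 - x) + 1) - (-1) * Real.log (1 - q))) x := by
        have d1 : HasDerivAt (fun x : ℝ => x * Real.log x) (Real.log x + 1) x :=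
          Real.hasDerivAt_mul_log hx0.ne'
        have dc : HasDerivAt (fun x : ℝ => 1 - x) (-1) x := by
          simpa using (hasDerivAt_id x).const_sub 1
        have d2 : HasDerivAt (fun x : ℝ => (1 - x) * Real.log (1 - x))
            ((Real.log (1 - x) + 1) * (-1)) x :=
          (Real.hasDerivAt_mul_log (by linarith : (1:ℝ) - x ≠ 0)).comp x dc
        have d3 : HasDerivAt (fun x : ℝ => x * Real.log q) (Real.log q) x := by
          simpa using (hasDerivAt_id x).mul_const (Real.log q)
        have d4 : HasDerivAt (fun x : ℝ => (1 - x) * Real.log (1 - q))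
            ((-1) * Real.log (1 - q)) x := by
          simpa using dc.mul_const (Real.log (1 - q))
        have := ((d1.sub d3).add ((d2.sub d4)))
        refine this.congr_deriv ?_
        ring
      rw [hd.deriv]
      have hlt : Real.log x + Real.log (1 - q) < Real.log q + Real.log (1 - x) := by
        rw [← Real.log_mul hx0.ne' h1q.ne', ← Real.log_mul hq0.ne' (by linarith : (1:ℝ) - x ≠ 0)]
        apply Real.log_lt_log (by positivity)
        nlinarith
      linarith
  intro x hx y hy hxy
  have key : ∀ z ∈ Set.Icc (0:ℝ) q,
      z * Real.log (z / q) + (1 - z) * Real.log ((1 - z) / (1 - q)) = g z := by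
    intro z hz
    obtain ⟨hz0, hzq⟩ := hz
    have hz1 : (0:ℝ) < 1 - z := by linarith
    rcases eq_or_lt_of_le hz0 with h | h
    · rw [← h]
      simp [g, Real.log_div hz1.ne' h1q.ne']
    · rw [Real.log_div h.ne' hq0.ne', Real.log_div hz1.ne' h1q.ne']
      simp [g]; ring
  simp only
  rw [key x hx, key y hy]
  exact hganti hx hy hxy
open MeasureTheory ProbabilityTheory Finset
open scoped ENNReal

lemma bern_ae_01 {Ω : Type*} [MeasurableSpace Ω] (μ : Measure Ω) [IsProbabilityMeasure μ]
    (p : ℝ) (X : ℕ → Ω → ℝ) (hmeas : ∀ t, Measurable (X t))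
    (hdist : ∀ t, Measure.map (X t) μ =
      ENNReal.ofReal (1 - p) • Measure.dirac (0 : ℝ) +
        ENNReal.ofReal p • Measure.dirac (1 : ℝ)) (t : ℕ) :
    ∀ᵐ ω ∂μ, X t ω = 0 ∨ X t ω = 1 := by
  have hS : MeasurableSet ({0, 1} : Set ℝ) := by measurability
  have : μ (X t ⁻¹' ({0, 1} : Set ℝ)ᶜ) = 0 := by
    rw [← Measure.map_apply (hmeas t) hS.compl, hdist t]
    simp [Measure.dirac_apply' _ hS.compl]
  filter_upwards [measure_eq_zero_iff_ae_notMem.mp this] with ω hω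
  by_cases h0 : X t ω = 0
  · exact Or.inl h0
  · simp [Set.mem_insert_iff, h0] at hω
    exact Or.inr hω

lemma bern_integrable_exp {Ω : Type*} [MeasurableSpace Ω] (μ : Measure Ω) [IsProbabilityMeasure μ]
    (p : ℝ) (X : ℕ → Ω → ℝ) (hmeas : ∀ t, Measurable (X t))
    (hdist : ∀ t, Measure.map (X t) μ =
      ENNReal.ofReal (1 - p) • Measure.dirac (0 : ℝ) +
        ENNReal.ofReal p • Measure.dirac (1 : ℝ)) (θ : ℝ) (t : ℕ) :
    Integrable (fun ω => Real.exp (θ * X t ω)) μ := by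
  refine Integrable.mono' (integrable_const (max 1 (Real.exp θ)))
    (((hmeas t).const_mul θ).exp.aestronglyMeasurable) ?_
  filter_upwards [bern_ae_01 μ p X hmeas hdist t] with ω hω
  rcases hω with h | h <;> rw [Real.norm_eq_abs, abs_of_pos (Real.exp_pos _)] <;> simp [h]

lemma bern_mgf {Ω : Type*} [MeasurableSpace Ω] (μ : Measure Ω) [IsProbabilityMeasure μ]
    (p : ℝ) (hp : p ∈ Set.Ioo (0:ℝ) 1) (X : ℕ → Ω → ℝ) (hmeas : ∀ t, Measurable (X t))
    (hdist : ∀ t, Measure.map (X t) μ =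
      ENNReal.ofReal (1 - p) • Measure.dirac (0 : ℝ) +
        ENNReal.ofReal p • Measure.dirac (1 : ℝ)) (θ : ℝ) (t : ℕ) :
    mgf (X t) μ θ = (1 - p) + p * Real.exp θ := by
  have hg : Measurable fun x : ℝ => Real.exp (θ * x) :=
    (measurable_const.mul measurable_id).exp
  have hint : Integrable (fun x : ℝ => Real.exp (θ * x))
      (ENNReal.ofReal (1 - p) • Measure.dirac (0 : ℝ) +
        ENNReal.ofReal p • Measure.dirac (1 : ℝ)) := by
    rw [← hdist t]
    exact (integrable_map_measure hg.aestronglyMeasurable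
      (hmeas t).aemeasurable).mpr (bern_integrable_exp μ p X hmeas hdist θ t)
  rw [integrable_add_measure] at hint
  rw [mgf, ← integral_map (hmeas t).aemeasurable hg.aestronglyMeasurable, hdist t,
    integral_add_measure hint.1 hint.2, integral_smul_measure, integral_smul_measure,
    integral_dirac, integral_dirac, ENNReal.toReal_ofReal (by linarith [hp.2] : (0:ℝ) ≤ 1 - p),
    ENNReal.toReal_ofReal hp.1.le]
  simp [Real.exp_zero]

lemma bern_chernoff {Ω : Type*} [MeasurableSpace Ω] (μ : Measure Ω) [IsProbabilityMeasure μ]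
    (p : ℝ) (hp : p ∈ Set.Ioo (0:ℝ) 1) (X : ℕ → Ω → ℝ) (hmeas : ∀ t, Measurable (X t))
    (hdist : ∀ t, Measure.map (X t) μ =
      ENNReal.ofReal (1 - p) • Measure.dirac (0 : ℝ) +
        ENNReal.ofReal p • Measure.dirac (1 : ℝ))
    (hindep : iIndepFun X μ)
    (z : ℝ) (hz : p < z) (hz1 : z < 1) (s : ℕ) :
    μ {ω | (s : ℝ) * z ≤ ∑ t ∈ Finset.range s, X t ω} ≤
      ENNReal.ofReal (Real.exp (-(s : ℝ) *
        (z * Real.log (z / p) + (1 - z) * Real.log ((1 - z) / (1 - p))))) := by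
  obtain ⟨hp0, hp1⟩ := hp
  have h1z : (0:ℝ) < 1 - z := by linarith
  have h1p : (0:ℝ) < 1 - p := by linarith
  have hz0 : (0:ℝ) < z := lt_trans hp0 hz
  set θ : ℝ := Real.log (z * (1 - p) / ((1 - z) * p)) with hθdef
  have hratio : (1:ℝ) < z * (1 - p) / ((1 - z) * p) := by
    rw [lt_div_iff₀ (by positivity)]
    nlinarith
  have hθpos : 0 < θ := Real.log_pos hratio
  have hexpθ : Real.exp θ = z * (1 - p) / ((1 - z) * p) :=
    Real.exp_log (by positivity)
  have h_int : ∀ i ∈ Finset.range s, Integrable (fun ω => Real.exp (θ * X i ω)) μ :=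
    fun i _ => bern_integrable_exp μ p X hmeas hdist θ i
  have h_int_sum : Integrable (fun ω => Real.exp (θ * (∑ i ∈ Finset.range s, X i) ω)) μ :=
    hindep.integrable_exp_mul_sum hmeas h_int
  have key := measure_ge_le_exp_cgf (X := ∑ i ∈ Finset.range s, X i) (μ := μ)
    ((s : ℝ) * z) hθpos.le h_int_sum
  rw [hindep.cgf_sum hmeas h_int] at key
  have hM : (1 - p) + p * Real.exp θ = (1 - p) / (1 - z) := by
    rw [hexpθ]; field_simp; ring
  have hcgf : ∀ i, cgf (X i) μ θ = Real.log ((1 - p) / (1 - z)) := by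
    intro i
    rw [cgf, bern_mgf μ p ⟨hp0, hp1⟩ X hmeas hdist θ i, hM]
  simp only [hcgf, Finset.sum_const, Finset.card_range, nsmul_eq_mul] at key
  have hexp_eq : -θ * ((s : ℝ) * z) + (s:ℝ) * Real.log ((1 - p) / (1 - z)) =
      -(s : ℝ) * (z * Real.log (z / p) + (1 - z) * Real.log ((1 - z) / (1 - p))) := by
    rw [hθdef, Real.log_div (by positivity) (by positivity), Real.log_mul hz0.ne' h1p.ne',
      Real.log_mul h1z.ne' hp0.ne', Real.log_div h1p.ne' h1z.ne',
      Real.log_div hz0.ne' hp0.ne', Real.log_div h1z.ne' h1p.ne']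
    ring
  rw [hexp_eq] at key
  calc μ {ω | (s : ℝ) * z ≤ ∑ t ∈ Finset.range s, X t ω}
      = ENNReal.ofReal (μ {ω | (s : ℝ) * z ≤ (∑ i ∈ Finset.range s, X i) ω}).toReal := by
        rw [ENNReal.ofReal_toReal (measure_ne_top _ _)]
        congr 1
        ext ω; simp [Finset.sum_apply]
    _ ≤ _ := ENNReal.ofReal_le_ofReal key

/-- Expected number of times the one-sided KL lower-confidence test
`d̲(μ̂_s, μ') ≤ a/s` succeeds, for i.i.d. Bernoulli(μ) samples and `μ' > μ`:
for every `ε ∈ (0, μ' − μ)`, `E[κ] ≤ a/d(μ+ε, μ') + 1/d(μ+ε, μ)`. -/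
theorem stmt_13
    {Ω : Type*} [MeasurableSpace Ω] (μ : Measure Ω) [IsProbabilityMeasure μ]
    (p : ℝ) (hp : p ∈ Set.Ioo (0 : ℝ) 1)
    (X : ℕ → Ω → ℝ)
    (hmeas : ∀ t, Measurable (X t))
    -- each `X t` is Bernoulli with mean `p`
    (hdist : ∀ t, Measure.map (X t) μ =
      ENNReal.ofReal (1 - p) • Measure.dirac (0 : ℝ) +
        ENNReal.ofReal p • Measure.dirac (1 : ℝ))
    (hindep : iIndepFun X μ)
    (muhat : ℕ → Ω → ℝ)
    (hmuhat : ∀ s ω, muhat s ω = (∑ t ∈ Finset.range s, X t ω) / s)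
    -- Bernoulli Kullback-Leibler divergence and its one-sided version
    (d dlow : ℝ → ℝ → ℝ)
    (hd : ∀ x y, d x y = x * Real.log (x / y) + (1 - x) * Real.log ((1 - x) / (1 - y)))
    (hdlow : ∀ x y, dlow x y = if x ≤ y then d x y else 0)
    (a : ℝ) (ha : 0 < a)
    (q : ℝ) (hq : q ∈ Set.Ioo p 1)
    (κ : Ω → ℝ≥0∞)
    (hκ : ∀ ω, κ ω = ∑' s : ℕ,
      if dlow (muhat (s + 1) ω) q ≤ a / ((s : ℝ) + 1) then (1 : ℝ≥0∞) else 0)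
    (ε : ℝ) (hε : ε ∈ Set.Ioo 0 (q - p)) :
    ∫⁻ ω, κ ω ∂μ ≤ ENNReal.ofReal (a / d (p + ε) q + 1 / d (p + ε) p) := by
  classical
  obtain ⟨hp0, hp1⟩ := hp
  obtain ⟨hqp, hq1⟩ := hq
  obtain ⟨hε0, hεq⟩ := hε
  set z : ℝ := p + ε with hzdef
  have hq0 : 0 < q := lt_trans hp0 hqp
  have hpz : p < z := by simp [hzdef]; linarith
  have hzq : z < q := by simp [hzdef]; linarith
  have hz0 : 0 < z := lt_trans hp0 hpz
  have hz1 : z < 1 := lt_trans hzq hq1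
  -- positivity of the two divergences
  have hanti_q := klAux_strictAnti hq0 hq1
  have hc₁ : 0 < d z q := by
    have := hanti_q (Set.mem_Icc.mpr ⟨hz0.le, hzq.le⟩)
      (Set.mem_Icc.mpr ⟨hq0.le, le_refl q⟩) hzq
    simp only [div_self hq0.ne', div_self (by linarith : (1:ℝ) - q ≠ 0), Real.log_one,
      mul_zero, add_zero, zero_add] at this
    rw [hd]
    linarith
  have hc₂ : 0 < d z p := by
    have h1p0 : (0:ℝ) < 1 - p := by linarith
    have h1p1 : (1:ℝ) - p < 1 := by linarith
    have hanti_p := klAux_strictAnti h1p0 h1p1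
    have hmem1 : 1 - z ∈ Set.Icc (0:ℝ) (1 - p) := Set.mem_Icc.mpr ⟨by linarith, by linarith⟩
    have hmem2 : 1 - p ∈ Set.Icc (0:ℝ) (1 - p) := Set.mem_Icc.mpr ⟨by linarith, le_refl _⟩
    have := hanti_p hmem1 hmem2 (by linarith)
    simp only [div_self (by linarith : (1:ℝ) - p ≠ 0), Real.log_one, mul_zero, add_zero,
      zero_add] at this
    have h11 : (1:ℝ) - (1 - z) = z := by ring
    have h12 : (1:ℝ) - (1 - p) = p := by ring
    have hlogp : Real.log (p / p) = 0 := by rw [div_self hp0.ne', Real.log_one]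
    rw [h11, h12, hlogp, mul_zero] at this
    rw [hd]
    linarith [this]
  set c₁ : ℝ := d z q
  set c₂ : ℝ := d z p
  -- measurable events
  have hmuhat_meas : ∀ s : ℕ, Measurable (muhat s) := by
    intro s
    have : muhat s = fun ω => (∑ t ∈ Finset.range s, X t ω) / (s : ℝ) := by
      funext ω; exact hmuhat s ω
    rw [this]
    exact (Finset.measurable_sum _ fun t _ => hmeas t).div_const _
  have hdlow_meas : Measurable fun x : ℝ => dlow x q := by
    have : (fun x : ℝ => dlow x q) = fun x =>
        if x ≤ q then x * Real.log (x / q) + (1 - x) * Real.log ((1 - x) / (1 - q)) else 0 := by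
      funext x; rw [hdlow, hd]
    rw [this]
    refine Measurable.ite (measurableSet_le measurable_id measurable_const) ?_ measurable_const
    exact (measurable_id.mul ((Real.measurable_log).comp (measurable_id.div_const q))).add
      ((measurable_const.sub measurable_id).mul ((Real.measurable_log).comp
        ((measurable_const.sub measurable_id).div_const (1 - q))))
  set E : ℕ → Set Ω := fun s => {ω | dlow (muhat (s + 1) ω) q ≤ a / ((s : ℝ) + 1)} with hE
  have hEmeas : ∀ s, MeasurableSet (E s) := fun s =>
    measurableSet_le (hdlow_meas.comp (hmuhat_meas (s + 1))) measurable_const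
  -- lintegral = sum of measures
  have hstep1 : ∫⁻ ω, κ ω ∂μ = ∑' s : ℕ, μ (E s) := by
    calc ∫⁻ ω, κ ω ∂μ = ∫⁻ ω, ∑' s : ℕ, (E s).indicator (fun _ => (1:ℝ≥0∞)) ω ∂μ := by
          apply lintegral_congr
          intro ω
          rw [hκ ω]
          exact tsum_congr fun s => by simp [Set.indicator_apply, hE]
      _ = ∑' s : ℕ, ∫⁻ ω, (E s).indicator (fun _ => (1:ℝ≥0∞)) ω ∂μ :=
          lintegral_tsum fun s => (measurable_one.indicator (hEmeas s)).aemeasurable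
      _ = ∑' s : ℕ, μ (E s) := by
          congr 1
          funext s
          rw [lintegral_indicator (hEmeas s)]
          simp
  rw [hstep1]
  -- good event
  have hgood : ∀ᵐ ω ∂μ, ∀ t : ℕ, X t ω = 0 ∨ X t ω = 1 :=
    ae_all_iff.mpr (bern_ae_01 μ p X hmeas hdist)
  -- per-s bound
  have hbound : ∀ s : ℕ, μ (E s) ≤
      (if (s:ℝ) + 1 ≤ a / c₁ then (1:ℝ≥0∞) else 0) +
        ENNReal.ofReal (Real.exp (-((s:ℝ) + 1) * c₂)) := by
    intro s
    by_cases hcase : (s:ℝ) + 1 ≤ a / c₁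
    · rw [if_pos hcase]
      exact le_add_right prob_le_one
    · rw [if_neg hcase, zero_add]
      have hslt : a / ((s:ℝ) + 1) < c₁ := by
        rw [not_le] at hcase
        rw [div_lt_iff₀ (by positivity)]
        rw [div_lt_iff₀ hc₁] at hcase
        nlinarith
      have hsub : μ (E s) ≤ μ {ω | ((s + 1 : ℕ) : ℝ) * z ≤ ∑ t ∈ Finset.range (s + 1), X t ω} := by
        apply measure_mono_ae
        filter_upwards [hgood] with ω hω hωE
        have hωE : dlow (muhat (s + 1) ω) q ≤ a / ((s:ℝ) + 1) := hωE
        show ((s + 1 : ℕ) : ℝ) * z ≤ ∑ t ∈ Finset.range (s + 1), X t ω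
        have hsum0 : (0:ℝ) ≤ ∑ t ∈ Finset.range (s + 1), X t ω :=
          Finset.sum_nonneg fun t _ => by rcases hω t with h | h <;> simp [h]
        have hsum1 : ∑ t ∈ Finset.range (s + 1), X t ω ≤ (s + 1 : ℕ) := by
          calc ∑ t ∈ Finset.range (s + 1), X t ω ≤ ∑ t ∈ Finset.range (s + 1), 1 :=
                Finset.sum_le_sum fun t _ => by rcases hω t with h | h <;> simp [h]
            _ = (s + 1 : ℕ) := by simp
        set m : ℝ := muhat (s + 1) ω with hm
        have hmval : m = (∑ t ∈ Finset.range (s + 1), X t ω) / ((s + 1 : ℕ) : ℝ) := by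
          rw [hm, hmuhat]
        have hs1pos : (0:ℝ) < ((s + 1 : ℕ) : ℝ) := by positivity
        have hm0 : 0 ≤ m := by rw [hmval]; positivity
        have hm1 : m ≤ 1 := by
          rw [hmval, div_le_one hs1pos]; exact hsum1
        have hzm : z ≤ m := by
          by_contra hc
          push_neg at hc
          have hmq : m ≤ q := by linarith
          have hdm : dlow m q = d m q := by rw [hdlow, if_pos hmq]
          have := hanti_q (Set.mem_Icc.mpr ⟨hm0, hmq⟩) (Set.mem_Icc.mpr ⟨hz0.le, hzq.le⟩) hc
          simp only at this
          rw [← hd m q, ← hd z q] at this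
          have hthis : c₁ < d m q := this
          linarith
        rw [hmval, le_div_iff₀ hs1pos] at hzm
        linarith [hzm]
      refine hsub.trans ?_
      have := bern_chernoff μ p ⟨hp0, hp1⟩ X hmeas hdist hindep z hpz hz1 (s + 1)
      rw [← hd z p] at this
      refine this.trans ?_
      apply ENNReal.ofReal_le_ofReal
      apply Real.exp_le_exp.mpr
      have : ((s + 1 : ℕ) : ℝ) = (s : ℝ) + 1 := by push_cast; ring
      rw [this]
  calc ∑' s : ℕ, μ (E s)
      ≤ ∑' s : ℕ, ((if (s:ℝ) + 1 ≤ a / c₁ then (1:ℝ≥0∞) else 0) +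
          ENNReal.ofReal (Real.exp (-((s:ℝ) + 1) * c₂))) := ENNReal.tsum_le_tsum hbound
    _ = (∑' s : ℕ, if (s:ℝ) + 1 ≤ a / c₁ then (1:ℝ≥0∞) else 0) +
          ∑' s : ℕ, ENNReal.ofReal (Real.exp (-((s:ℝ) + 1) * c₂)) := ENNReal.tsum_add
    _ ≤ ENNReal.ofReal (a / c₁) + ENNReal.ofReal (1 / c₂) := by
        gcongr
        · -- indicator sum
          set N : ℕ := ⌊a / c₁⌋₊ with hN
          have hvanish : ∀ s : ℕ, s ∉ Finset.range N →
              (if (s:ℝ) + 1 ≤ a / c₁ then (1:ℝ≥0∞) else 0) = 0 := by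
            intro s hs
            rw [Finset.mem_range, not_lt] at hs
            rw [if_neg]
            intro hcon
            have : s + 1 ≤ N := Nat.le_floor (by push_cast; linarith)
            omega
          rw [tsum_eq_sum hvanish]
          calc ∑ s ∈ Finset.range N, (if (s:ℝ) + 1 ≤ a / c₁ then (1:ℝ≥0∞) else 0)
              ≤ ∑ s ∈ Finset.range N, 1 := Finset.sum_le_sum fun s _ => by split <;> simp
            _ = (N : ℝ≥0∞) := by simp
            _ ≤ ENNReal.ofReal (a / c₁) := by
                rw [← ENNReal.ofReal_natCast]
                exact ENNReal.ofReal_le_ofReal (Nat.floor_le (by positivity))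
        · -- geometric sum
          set r : ℝ := Real.exp (-c₂) with hr
          have hr0 : 0 < r := Real.exp_pos _
          have hr1 : r < 1 := Real.exp_lt_one_iff.mpr (by linarith)
          have hterm : ∀ s : ℕ, Real.exp (-((s:ℝ) + 1) * c₂) = r ^ (s + 1) := by
            intro s
            rw [hr, ← Real.exp_nat_mul]
            congr 1
            push_cast
            ring
          have hsummable : Summable fun s : ℕ => r ^ (s + 1) := by
            simp_rw [pow_succ]
            exact (summable_geometric_of_lt_one hr0.le hr1).mul_right r
          calc ∑' s : ℕ, ENNReal.ofReal (Real.exp (-((s:ℝ) + 1) * c₂))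
              = ENNReal.ofReal (∑' s : ℕ, r ^ (s + 1)) := by
                simp_rw [hterm]
                exact (ENNReal.ofReal_tsum_of_nonneg (fun s => by positivity) hsummable).symm
            _ ≤ ENNReal.ofReal (1 / c₂) := by
                apply ENNReal.ofReal_le_ofReal
                have hts : ∑' s : ℕ, r ^ (s + 1) = (1 - r)⁻¹ * r := by
                  simp_rw [pow_succ]
                  rw [tsum_mul_right, tsum_geometric_of_lt_one hr0.le hr1]
                rw [hts]
                have hkey : r * (1 + c₂) ≤ 1 := by
                  have h1 : c₂ + 1 ≤ Real.exp c₂ := Real.add_one_le_exp c₂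
                  have h2 : r * Real.exp c₂ = 1 := by
                    rw [hr, ← Real.exp_add]; simp
                  nlinarith
                rw [mul_comm, ← div_eq_mul_inv, div_le_div_iff₀ (by linarith) hc₂]
                nlinarith
    _ = ENNReal.ofReal (a / c₁ + 1 / c₂) := by
        rw [ENNReal.ofReal_add (by positivity) (by positivity)]
end

section
/- Let X_1, X_2, … be a sequence of independent Bernoulli random variables with mean μ ∈ (0,1), and let μ̂_s = (1/s)·Σ_{t=1}^s X_t. Let ε ∈ (0, μ) and c > 0. Then Σ_{s=1}^∞ P( μ̂_s < μ and d(μ̂_s, μ) > c/s + d(μ − ε, μ) ) ≤ exp(−c)/d(μ − ε, μ), where d(p, q) = p·log(p/q) + (1−p)·log((1−p)/(1−q)) is the Kullback–Leibler divergence between Bernoulli distributions of means p and q. -/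
open MeasureTheory ProbabilityTheory Finset
open scoped ENNReal

set_option linter.unusedSectionVars false
set_option maxHeartbeats 1000000

/-- smooth version of the Bernoulli KL divergence -/
noncomputable def klF (p x : ℝ) : ℝ :=
  x * Real.log x - x * Real.log p + ((1-x) * Real.log (1-x) - (1-x) * Real.log (1-p))

lemma klF_eq (p : ℝ) (hp : p ∈ Set.Ioo (0:ℝ) 1) (x : ℝ) (hx0 : 0 ≤ x) (hx1 : x < 1) :
    x * Real.log (x / p) + (1 - x) * Real.log ((1 - x) / (1 - p)) = klF p x := by
  rcases eq_or_lt_of_le hx0 with h0 | h0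
  · rw [← h0]
    rw [Real.log_div (by norm_num) (by linarith [hp.2] : (1:ℝ) - p ≠ 0)]
    simp [klF]
  · rw [Real.log_div h0.ne' hp.1.ne',
      Real.log_div (by linarith : (1:ℝ) - x ≠ 0) (by linarith [hp.2] : (1:ℝ) - p ≠ 0)]
    simp only [klF]; ring

lemma klF_continuous (p : ℝ) : Continuous (klF p) := by
  unfold klF
  have h1 : Continuous fun x : ℝ => x * Real.log x := Real.continuous_mul_log
  have h2 : Continuous fun x : ℝ => (1-x) * Real.log (1-x) :=
    h1.comp (continuous_const.sub continuous_id)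
  fun_prop

lemma klF_hasDeriv (p x : ℝ) (hx0 : 0 < x) (hx1 : x < 1) :
    HasDerivAt (klF p) (Real.log x - Real.log p - (Real.log (1-x) - Real.log (1-p))) x := by
  have h1 : HasDerivAt (fun x : ℝ => x * Real.log x) (Real.log x + 1) x :=
    Real.hasDerivAt_mul_log hx0.ne'
  have h2 : HasDerivAt (fun x : ℝ => (1-x) * Real.log (1-x)) (-(Real.log (1-x) + 1)) x := by
    have := (Real.hasDerivAt_mul_log (by linarith : (1:ℝ) - x ≠ 0)).comp x
      ((hasDerivAt_id x).const_sub 1)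
    exact this.congr_deriv (by ring)
  have h3 : HasDerivAt (fun x : ℝ => x * Real.log p) (Real.log p) x := by
    simpa using (hasDerivAt_mul_const (Real.log p) : HasDerivAt (fun y : ℝ => y * Real.log p) _ x)
  have h4 : HasDerivAt (fun x : ℝ => (1-x) * Real.log (1-p)) (-Real.log (1-p)) x := by
    have := ((hasDerivAt_id x).const_sub 1).const_mul (Real.log (1-p))
    simpa [mul_comm] using this.congr_deriv (by ring)
  have := ((h1.sub h3).add (h2.sub h4))
  exact this.congr_deriv (by ring)

lemma klF_strictAntiOn (p : ℝ) (hp : p ∈ Set.Ioo (0:ℝ) 1) :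
    StrictAntiOn (klF p) (Set.Icc 0 p) := by
  apply strictAntiOn_of_deriv_neg (convex_Icc 0 p) (klF_continuous p).continuousOn
  intro x hx
  rw [interior_Icc] at hx
  have hx0 : 0 < x := hx.1
  have hx1 : x < 1 := lt_trans hx.2 hp.2
  rw [(klF_hasDeriv p x hx0 hx1).deriv]
  have h1 : Real.log x < Real.log p := Real.log_lt_log hx0 hx.2
  have h2 : Real.log (1-p) < Real.log (1-x) :=
    Real.log_lt_log (by linarith [hp.2]) (by linarith [hx.2])
  linarith

lemma klF_self (p : ℝ) : klF p p = 0 := by simp [klF]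

lemma klF_pos (p : ℝ) (hp : p ∈ Set.Ioo (0:ℝ) 1) (x : ℝ) (hx0 : 0 ≤ x) (hxp : x < p) :
    0 < klF p x := by
  have := klF_strictAntiOn p hp (Set.mem_Icc.2 ⟨hx0, hxp.le⟩)
    (Set.mem_Icc.2 ⟨hp.1.le, le_refl p⟩) hxp
  rw [klF_self] at this; exact this

lemma my_integrable_dirac {f : ℝ → ℝ} (hf : Measurable f) (a : ℝ) :
    Integrable f (Measure.dirac a) := by
  refine ⟨hf.aestronglyMeasurable, ?_⟩
  rw [HasFiniteIntegral, lintegral_dirac' a hf.enorm]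
  exact enorm_lt_top

section Bern
variable {Ω : Type*} [MeasurableSpace Ω] (μ : Measure Ω) [IsProbabilityMeasure μ]
    (p : ℝ) (hp : p ∈ Set.Ioo (0 : ℝ) 1) (X : ℕ → Ω → ℝ)
    (hmeas : ∀ t, Measurable (X t))
    (hdist : ∀ t, Measure.map (X t) μ =
      ENNReal.ofReal (1 - p) • Measure.dirac (0 : ℝ) +
        ENNReal.ofReal p • Measure.dirac (1 : ℝ))
    (hindep : iIndepFun X μ)

include hp hmeas hdist in
lemma bern_mgf_s14 (t : ℕ) (l : ℝ) : mgf (X t) μ l = (1 - p) + p * Real.exp l := by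
  have hcont : Measurable fun y : ℝ => Real.exp (l * y) :=
    Real.measurable_exp.comp (measurable_const.mul measurable_id)
  have h1 : mgf (X t) μ l = ∫ y, Real.exp (l * y) ∂(Measure.map (X t) μ) := by
    rw [integral_map (hmeas t).aemeasurable hcont.aestronglyMeasurable]; rfl
  rw [h1, hdist t,
    integral_add_measure
      ((my_integrable_dirac hcont 0).smul_measure ENNReal.ofReal_ne_top)
      ((my_integrable_dirac hcont 1).smul_measure ENNReal.ofReal_ne_top),
    integral_smul_measure, integral_smul_measure, integral_dirac, integral_dirac]
  rw [ENNReal.toReal_ofReal (by linarith [hp.2]), ENNReal.toReal_ofReal hp.1.le]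
  simp

include hmeas hdist in
lemma bern_ae01 : ∀ᵐ ω ∂μ, ∀ t, X t ω ∈ ({0, 1} : Set ℝ) := by
  rw [ae_all_iff]
  intro t
  have hm : MeasurableSet (({0, 1} : Set ℝ)ᶜ) := (by measurability)
  have h0 : μ (X t ⁻¹' ({0, 1} : Set ℝ)ᶜ) = 0 := by
    rw [← Measure.map_apply (hmeas t) hm, hdist t]
    simp [Measure.dirac_apply' _ hm]
  rw [ae_iff]
  convert h0 using 2
  rfl

include hp hmeas hdist hindep in
lemma bern_chernoff_s14 (n : ℕ) (a : ℝ) (ha : a ∈ Set.Ioo 0 p) :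
    (μ {ω | (∑ t ∈ Finset.range n, X t ω) ≤ n * a}).toReal ≤
      Real.exp (-(n : ℝ) * klF p a) := by
  have bmgf := bern_mgf_s14 μ p hp X hmeas hdist
  have bae := bern_ae01 μ p X hmeas hdist
  obtain ⟨ha0, hap⟩ := ha
  obtain ⟨hp0, hp1⟩ := hp
  have ha1 : a < 1 := hap.trans hp1
  have h1a : 0 < 1 - a := by linarith
  have h1p : 0 < 1 - p := by linarith
  set l : ℝ := Real.log (a * (1 - p) / (p * (1 - a))) with hl_def
  have harg_pos : 0 < a * (1 - p) / (p * (1 - a)) := by positivity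
  have hexp_l : Real.exp l = a * (1 - p) / (p * (1 - a)) := Real.exp_log harg_pos
  have hl_nonpos : l ≤ 0 := by
    apply Real.log_nonpos harg_pos.le
    rw [div_le_one (by positivity)]
    nlinarith
  have hl_expand : l = Real.log a + Real.log (1 - p) - (Real.log p + Real.log (1 - a)) := by
    rw [hl_def, Real.log_div (by positivity) (by positivity),
      Real.log_mul ha0.ne' h1p.ne', Real.log_mul hp0.ne' h1a.ne']
  set S : Ω → ℝ := ∑ t ∈ Finset.range n, X t with hS_def
  have hS_apply : ∀ ω, S ω = ∑ t ∈ Finset.range n, X t ω := fun ω => by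
    simp [hS_def]
  have hS_meas : Measurable S := by
    have : S = fun ω => ∑ t ∈ Finset.range n, X t ω := funext hS_apply
    rw [this]; exact Finset.measurable_sum _ fun i _ => hmeas i
  have h_int : Integrable (fun ω => Real.exp (l * S ω)) μ := by
    refine Integrable.mono' (integrable_const (Real.exp (|l| * n))) ?_ ?_
    · exact (Real.measurable_exp.comp (measurable_const.mul hS_meas)).aestronglyMeasurable
    · filter_upwards [bae] with ω hω
      have hS_bounds : 0 ≤ S ω ∧ S ω ≤ n := by
        rw [hS_apply]
        constructor
        · exact Finset.sum_nonneg fun t _ => by rcases hω t with h | h <;> simp_all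
        · calc ∑ t ∈ Finset.range n, X t ω ≤ ∑ t ∈ Finset.range n, 1 :=
              Finset.sum_le_sum fun t _ => by rcases hω t with h | h <;> simp_all
            _ = n := by simp
      rw [Real.norm_eq_abs, abs_of_nonneg (Real.exp_nonneg _), Real.exp_le_exp]
      calc l * S ω ≤ |l| * S ω := mul_le_mul_of_nonneg_right (le_abs_self l) hS_bounds.1
        _ ≤ |l| * n := mul_le_mul_of_nonneg_left hS_bounds.2 (abs_nonneg l)
  have h_mgf : mgf S μ l = ((1 - p) / (1 - a)) ^ n := by
    rw [hS_def, hindep.mgf_sum hmeas (Finset.range n)]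
    have : ∀ t, mgf (X t) μ l = (1 - p) / (1 - a) := by
      intro t
      rw [bmgf t l, hexp_l]
      field_simp
      ring
    rw [Finset.prod_congr rfl fun t _ => this t, Finset.prod_const, Finset.card_range]
  have key := measure_le_le_exp_mul_mgf (μ := μ) (X := S) (n * a) hl_nonpos h_int
  have hset : {ω | S ω ≤ n * a} = {ω | (∑ t ∈ Finset.range n, X t ω) ≤ n * a} := by
    ext ω; rw [Set.mem_setOf_eq, Set.mem_setOf_eq, hS_apply]
  rw [hset] at key
  refine key.trans (le_of_eq ?_)
  rw [h_mgf]
  have hpow : ((1 - p) / (1 - a)) ^ n = Real.exp ((n : ℝ) * Real.log ((1 - p) / (1 - a))) := by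
    rw [Real.exp_nat_mul, Real.exp_log (by positivity)]
  rw [hpow, ← Real.exp_add]
  congr 1
  rw [Real.log_div h1p.ne' h1a.ne', hl_expand]
  simp only [klF]
  ring

end Bern

/-- For i.i.d. Bernoulli(μ) samples, `ε ∈ (0, μ)` and `c > 0`,
`Σ_{s≥1} P(μ̂_s < μ and d(μ̂_s, μ) > c/s + d(μ−ε, μ)) ≤ exp(−c)/d(μ−ε, μ)`. -/
theorem stmt_14
    {Ω : Type*} [MeasurableSpace Ω] (μ : Measure Ω) [IsProbabilityMeasure μ]
    (p : ℝ) (hp : p ∈ Set.Ioo (0 : ℝ) 1)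
    (X : ℕ → Ω → ℝ)
    (hmeas : ∀ t, Measurable (X t))
    -- each `X t` is Bernoulli with mean `p`
    (hdist : ∀ t, Measure.map (X t) μ =
      ENNReal.ofReal (1 - p) • Measure.dirac (0 : ℝ) +
        ENNReal.ofReal p • Measure.dirac (1 : ℝ))
    (hindep : iIndepFun X μ)
    (muhat : ℕ → Ω → ℝ)
    (hmuhat : ∀ s ω, muhat s ω = (∑ t ∈ Finset.range s, X t ω) / s)
    -- Bernoulli Kullback-Leibler divergence
    (d : ℝ → ℝ → ℝ)
    (hd : ∀ x y, d x y = x * Real.log (x / y) + (1 - x) * Real.log ((1 - x) / (1 - y)))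
    (ε : ℝ) (hε : ε ∈ Set.Ioo 0 p) (c : ℝ) (hc : 0 < c) :
    (∑' s : ℕ, μ {ω | muhat (s + 1) ω < p ∧
        c / ((s : ℝ) + 1) + d (p - ε) p < d (muhat (s + 1) ω) p}) ≤
      ENNReal.ofReal (Real.exp (-c) / d (p - ε) p) := by
  obtain ⟨hp0, hp1⟩ := hp
  obtain ⟨hε0, hεp⟩ := hε
  have hpmem : p ∈ Set.Ioo (0:ℝ) 1 := ⟨hp0, hp1⟩
  set d₀ : ℝ := klF p (p - ε) with hd₀_def
  have hd₀_pos : 0 < d₀ := klF_pos p hpmem (p - ε) (by linarith) (by linarith)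
  have hd_eq : d (p - ε) p = d₀ := by
    rw [hd]
    exact klF_eq p hpmem (p - ε) (by linarith) (by linarith)
  have bae := bern_ae01 μ p X hmeas hdist
  -- per-term bound
  have step1 : ∀ s : ℕ, μ {ω | muhat (s + 1) ω < p ∧
      c / ((s : ℝ) + 1) + d (p - ε) p < d (muhat (s + 1) ω) p} ≤
      ENNReal.ofReal (Real.exp (-c) * Real.exp (-((s : ℝ) + 1) * d₀)) := by
    intro s
    set nR : ℝ := (s : ℝ) + 1 with hnR_def
    have hnR_pos : 0 < nR := by positivity
    set θ : ℝ := c / nR + d₀ with hθ_def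
    have hθ_pos : 0 < θ := by positivity
    -- membership facts for a.e. ω in the event
    have hmu_facts : ∀ ω, (∀ t, X t ω ∈ ({0, 1} : Set ℝ)) →
        0 ≤ muhat (s + 1) ω ∧ muhat (s + 1) ω ≤ 1 ∧
          (∑ t ∈ Finset.range (s + 1), X t ω) = nR * muhat (s + 1) ω := by
      intro ω hω
      have hsum0 : 0 ≤ ∑ t ∈ Finset.range (s + 1), X t ω :=
        Finset.sum_nonneg fun t _ => by rcases hω t with h | h <;> simp_all
      have hsum1 : (∑ t ∈ Finset.range (s + 1), X t ω) ≤ nR := by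
        calc ∑ t ∈ Finset.range (s + 1), X t ω ≤ ∑ t ∈ Finset.range (s + 1), 1 :=
            Finset.sum_le_sum fun t _ => by rcases hω t with h | h <;> simp_all
          _ = ((s : ℝ) + 1) := by simp
      have hcast : ((s + 1 : ℕ) : ℝ) = nR := by push_cast [hnR_def]; ring
      have hmu : muhat (s + 1) ω = (∑ t ∈ Finset.range (s + 1), X t ω) / nR := by
        rw [hmuhat, hcast]
      refine ⟨by rw [hmu]; positivity, ?_, ?_⟩
      · rw [hmu, div_le_one hnR_pos]; exact hsum1
      · rw [hmu]; field_simp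
    by_cases hcase : θ < klF p 0
    · -- IVT : find a ∈ (0,p) with klF p a = θ
      have hsub := intermediate_value_Icc' hp0.le (klF_continuous p).continuousOn
      have hθ_mem : θ ∈ Set.Icc (klF p p) (klF p 0) := by
        rw [klF_self]
        exact ⟨hθ_pos.le, hcase.le⟩
      obtain ⟨a, ha_mem, haθ⟩ := hsub hθ_mem
      have ha0 : 0 < a := by
        rcases eq_or_lt_of_le ha_mem.1 with h | h
        · exfalso; rw [← h] at haθ; rw [haθ] at hcase; exact lt_irrefl _ hcase
        · exact h
      have hap : a < p := by
        rcases eq_or_lt_of_le ha_mem.2 with h | h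
        · exfalso; rw [h, klF_self] at haθ; rw [← haθ] at hθ_pos; exact lt_irrefl _ hθ_pos
        · exact h
      -- event ⊆ {sum ≤ n * a} a.e.
      have hincl : μ {ω | muhat (s + 1) ω < p ∧
          c / ((s : ℝ) + 1) + d (p - ε) p < d (muhat (s + 1) ω) p} ≤
          μ {ω | (∑ t ∈ Finset.range (s + 1), X t ω) ≤ (s + 1 : ℕ) * a} := by
        apply measure_mono_ae
        filter_upwards [bae] with ω hω hE
        obtain ⟨hE1, hE2⟩ := hE
        obtain ⟨hm0, hm1, hm_sum⟩ := hmu_facts ω hω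
        set m : ℝ := muhat (s + 1) ω
        have hm_lt1 : m < 1 := lt_of_lt_of_le hE1 hp1.le
        have hdm : d m p = klF p m := by
          rw [hd]; exact klF_eq p hpmem m hm0 hm_lt1
        rw [hd_eq, hdm] at hE2
        -- klF p a = θ < klF p m  ⟹  m < a
        have hma : m < a := by
          by_contra h
          push_neg at h
          have : klF p m ≤ klF p a := by
            rcases eq_or_lt_of_le h with h' | h'
            · rw [h']
            · exact le_of_lt (klF_strictAntiOn p hpmem ⟨ha0.le, hap.le⟩ ⟨hm0, hE1.le⟩ h')
          rw [haθ] at this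
          exact absurd hE2 (not_lt.2 this)
        show (∑ t ∈ Finset.range (s + 1), X t ω) ≤ (s + 1 : ℕ) * a
        have hcast : ((s + 1 : ℕ) : ℝ) = nR := by push_cast [hnR_def]; ring
        rw [hcast, hm_sum]
        exact le_of_lt (by exact mul_lt_mul_of_pos_left hma hnR_pos)
      refine hincl.trans ?_
      have hch := bern_chernoff_s14 μ p hpmem X hmeas hdist hindep (s + 1) a ⟨ha0, hap⟩
      rw [haθ] at hch
      have hcast : ((s + 1 : ℕ) : ℝ) = nR := by push_cast [hnR_def]; ring
      have hgoal_eq : Real.exp (-((s + 1 : ℕ) : ℝ) * θ) =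
          Real.exp (-c) * Real.exp (-((s : ℝ) + 1) * d₀) := by
        rw [← Real.exp_add]
        congr 1
        rw [hcast, hθ_def, hnR_def]
        field_simp
        ring
      rw [ENNReal.le_ofReal_iff_toReal_le (measure_ne_top μ _) (by positivity)]
      exact hch.trans (le_of_eq hgoal_eq)
    · -- event is a.e. empty
      push_neg at hcase
      have hzero : μ {ω | muhat (s + 1) ω < p ∧
          c / ((s : ℝ) + 1) + d (p - ε) p < d (muhat (s + 1) ω) p} = 0 := by
        rw [← le_zero_iff, ← measure_empty (μ := μ)]
        apply measure_mono_ae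
        filter_upwards [bae] with ω hω hE
        obtain ⟨hE1, hE2⟩ := hE
        obtain ⟨hm0, hm1, _⟩ := hmu_facts ω hω
        set m : ℝ := muhat (s + 1) ω
        have hm_lt1 : m < 1 := lt_of_lt_of_le hE1 hp1.le
        have hdm : d m p = klF p m := by
          rw [hd]; exact klF_eq p hpmem m hm0 hm_lt1
        rw [hd_eq, hdm] at hE2
        have hle : klF p m ≤ klF p 0 := by
          rcases eq_or_lt_of_le hm0 with h | h
          · rw [← h]
          · exact le_of_lt (klF_strictAntiOn p hpmem ⟨le_refl 0, hp0.le⟩ ⟨hm0, hE1.le⟩ h)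
        exact absurd hE2 (not_lt.2 (hle.trans hcase))
      rw [hzero]
      exact zero_le
  -- sum the geometric series
  set r : ℝ := Real.exp (-d₀) with hr_def
  have hr0 : 0 < r := Real.exp_pos _
  have hr1 : r < 1 := Real.exp_lt_one_iff.2 (by linarith)
  have h1r : 0 < 1 - r := by linarith
  have hterm : ∀ s : ℕ, Real.exp (-c) * Real.exp (-((s : ℝ) + 1) * d₀) =
      (Real.exp (-c) * r) * r ^ s := by
    intro s
    rw [hr_def, ← Real.exp_nat_mul, ← Real.exp_add, ← Real.exp_add, ← Real.exp_add]
    congr 1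
    push_cast
    ring
  have hsummable : Summable (fun s : ℕ => Real.exp (-c) * Real.exp (-((s : ℝ) + 1) * d₀)) :=
    Summable.congr ((summable_geometric_of_lt_one hr0.le hr1).mul_left
      (Real.exp (-c) * r)) (fun s => (hterm s).symm)
  calc (∑' s : ℕ, μ {ω | muhat (s + 1) ω < p ∧
        c / ((s : ℝ) + 1) + d (p - ε) p < d (muhat (s + 1) ω) p})
      ≤ ∑' s : ℕ, ENNReal.ofReal (Real.exp (-c) * Real.exp (-((s : ℝ) + 1) * d₀)) :=
        ENNReal.tsum_le_tsum step1
    _ = ENNReal.ofReal (∑' s : ℕ, Real.exp (-c) * Real.exp (-((s : ℝ) + 1) * d₀)) := by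
        exact (ENNReal.ofReal_tsum_of_nonneg (fun s => by positivity) hsummable).symm
    _ ≤ ENNReal.ofReal (Real.exp (-c) / d (p - ε) p) := by
        apply ENNReal.ofReal_le_ofReal
        have hsum_eq : (∑' s : ℕ, Real.exp (-c) * Real.exp (-((s : ℝ) + 1) * d₀)) =
            (Real.exp (-c) * r) * (1 - r)⁻¹ := by
          rw [tsum_congr hterm, tsum_mul_left, tsum_geometric_of_lt_one hr0.le hr1]
        rw [hsum_eq, hd_eq]
        have hEr : Real.exp d₀ * r = 1 := by
          rw [hr_def, ← Real.exp_add]; simp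
        have hkey : r * (1 - r)⁻¹ ≤ d₀⁻¹ := by
          rw [inv_eq_one_div, inv_eq_one_div, mul_one_div, div_le_div_iff₀ h1r hd₀_pos]
          nlinarith [Real.add_one_le_exp d₀, hr0]
        calc Real.exp (-c) * r * (1 - r)⁻¹ = Real.exp (-c) * (r * (1 - r)⁻¹) := by ring
          _ ≤ Real.exp (-c) * d₀⁻¹ :=
            mul_le_mul_of_nonneg_left hkey (Real.exp_nonneg _)
          _ = Real.exp (-c) / d₀ := by rw [div_eq_mul_inv]
end

section
/- Let 0 < λ_ℓ < λ_k and let Δ satisfy 0 < Δ ≤ λ_ℓ/4. Then (1 − exp(−Δ/λ_ℓ)) − (1 − exp(−Δ/λ_k)) ≥ Δ·(λ_k − λ_ℓ)/(1.46·λ_k·λ_ℓ). -/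
/-- Gap between per-window termination probabilities of exponential jobs:
for `0 < λ_ℓ < λ_k` and `0 < Δ ≤ λ_ℓ/4`,
`(1 − e^{−Δ/λ_ℓ}) − (1 − e^{−Δ/λ_k}) ≥ Δ(λ_k − λ_ℓ)/(1.46·λ_k·λ_ℓ)`. -/
theorem stmt_17
    (laml lamk Δ : ℝ) (hl : 0 < laml) (hlk : laml < lamk)
    (hΔ0 : 0 < Δ) (hΔ : Δ ≤ laml / 4) :
    Δ * (lamk - laml) / (1.46 * lamk * laml) ≤
      (1 - Real.exp (-Δ / laml)) - (1 - Real.exp (-Δ / lamk)) := by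
  have hk : 0 < lamk := hl.trans hlk
  set a := Δ / lamk with ha
  set b := Δ / laml with hb
  have hab : a ≤ b := by
    rw [ha, hb]
    exact div_le_div_of_nonneg_left hΔ0.le hl hlk.le
  have hb4 : b ≤ 1 / 4 := by
    rw [hb, div_le_iff₀ hl]; linarith
  have h1 : Real.exp (b - a) - 1 ≥ b - a := by
    linarith [Real.add_one_le_exp (b - a)]
  have h2 : Real.exp (-b) ≥ 3 / 4 := by
    have := Real.add_one_le_exp (-b); linarith
  have hsplit : Real.exp (-a) - Real.exp (-b)
      = Real.exp (-b) * (Real.exp (b - a) - 1) := by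
    rw [mul_sub, mul_one, ← Real.exp_add]; ring_nf
  have hkey : Real.exp (-a) - Real.exp (-b) ≥ (3 / 4) * (b - a) := by
    rw [hsplit]
    nlinarith [Real.exp_pos (-b), h1, h2, hab]
  have heq : Δ * (lamk - laml) / (1.46 * lamk * laml) = (b - a) / 1.46 := by
    rw [ha, hb]; field_simp
  have hna : -Δ / lamk = -a := by rw [ha]; ring
  have hnb : -Δ / laml = -b := by rw [hb]; ring
  rw [hna, hnb, heq]
  have hba : (0:ℝ) ≤ b - a := by linarith
  have : (b - a) / 1.46 ≤ 3 / 4 * (b - a) := by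
    rw [div_le_iff₀ (by norm_num : (0:ℝ) < 1.46)]
    nlinarith
  linarith
end
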